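/- arXiv:1110.4278 — 5 statements merged into one kernel-verified Lean document; each statement's English description precedes it below -/
import Mathlib

section
/- The unique minimizer of the generalized semi-supervised learning objective is given columnwise by F_{·k} = (μ/(2+μ)) (I − (2/(2+μ)) D^{−σ} W D^{σ−1})^{−1} Y_{·k}, assuming the matrix I − (2/(2+μ)) D^{−σ} W D^{σ−1} is invertible. -/
open Matrix Finset

/-- The unique minimizer of the generalized semi-supervised learning objective
is given columnwise by `F_{·k} = (μ/(2+μ)) (I − (2/(2+μ)) D^{−σ} W D^{σ−1})^{−1} Y_{·k}`,
assuming `I − (2/(2+μ)) D^{−σ} W D^{σ−1}` is invertible. -/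
theorem generalized_objective_unique_minimizer
    (N K : ℕ) (W : Matrix (Fin N) (Fin N) ℝ)
    (hWsym : W.IsSymm) (hWnonneg : ∀ i j, 0 ≤ W i j)
    (d : Fin N → ℝ) (hd : ∀ i, d i = ∑ j, W i j) (hdpos : ∀ i, 0 < d i)
    (σ μ : ℝ) (hμ : 0 < μ) (Y : Matrix (Fin N) (Fin K) ℝ)
    (Q : Matrix (Fin N) (Fin K) ℝ → ℝ)
    (hQ : ∀ F, Q F =
      (∑ i, ∑ j, W i j * ∑ k, (d i ^ (σ - 1) * F i k - d j ^ (σ - 1) * F j k) ^ 2)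
      + μ * ∑ i, d i ^ (2 * σ - 1) * ∑ k, (F i k - Y i k) ^ 2)
    (M : Matrix (Fin N) (Fin N) ℝ)
    (hM : M = 1 - (2 / (2 + μ)) •
      (Matrix.diagonal (fun i => d i ^ (-σ)) * W * Matrix.diagonal (fun i => d i ^ (σ - 1))))
    (hMinv : IsUnit M)
    (F : Matrix (Fin N) (Fin K) ℝ)
    (hF : ∀ k, (fun i => F i k) = (μ / (2 + μ)) • (M⁻¹ *ᵥ (fun i => Y i k))) :
    (∀ G, Q F ≤ Q G) ∧ (∀ G, (∀ G', Q G ≤ Q G') → G = F) := by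
  have h2μ : (0:ℝ) < 2 + μ := by linarith
  have symmW : ∀ i j, W j i = W i j := fun i j => by
    conv_lhs => rw [← hWsym]
    rfl
  -- rpow facts
  have rp1 : ∀ i, d i ^ (σ-1) * d i = d i ^ σ := by
    intro i
    have h := Real.rpow_add (hdpos i) (σ-1) 1
    rw [Real.rpow_one, show σ - 1 + 1 = σ by ring] at h
    exact h.symm
  have rp2 : ∀ i, d i ^ (σ-1) * d i ^ σ = d i ^ (2*σ-1) := by
    intro i
    have h := Real.rpow_add (hdpos i) (σ-1) σ
    rw [show σ - 1 + σ = 2*σ - 1 by ring] at h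
    exact h.symm
  have rp3 : ∀ i, d i ^ (-σ) * d i ^ σ = 1 := by
    intro i
    rw [← Real.rpow_add (hdpos i)]; simp
  have rpc : ∀ i, (0:ℝ) < d i ^ (2*σ-1) := fun i => Real.rpow_pos_of_pos (hdpos i) _
  -- stationarity
  have hM1 : M * M⁻¹ = 1 := Matrix.mul_nonsing_inv M ((Matrix.isUnit_iff_isUnit_det M).mp hMinv)
  have stat : ∀ i k, (2+μ) * (d i ^ σ * F i k) - 2 * ∑ j, W i j * (d j ^ (σ-1) * F j k)
      = μ * (d i ^ σ * Y i k) := by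
    intro i k
    have h1 : M *ᵥ (fun i => F i k) = (μ/(2+μ)) • (fun i => Y i k) := by
      rw [hF k, Matrix.mulVec_smul, Matrix.mulVec_mulVec, hM1, Matrix.one_mulVec]
    have h2 := congrFun h1 i
    simp only [Matrix.mulVec, dotProduct, hM, Matrix.sub_apply, Matrix.smul_apply,
      Matrix.one_apply, Matrix.mul_diagonal, Matrix.diagonal_mul, smul_eq_mul,
      Pi.smul_apply] at h2
    simp only [sub_mul] at h2
    rw [Finset.sum_sub_distrib] at h2
    simp only [ite_mul, one_mul, zero_mul, Finset.sum_ite_eq, Finset.mem_univ, if_true] at h2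
    have e1 : ∑ j, 2/(2+μ) * (d i ^(-σ) * W i j * d j ^(σ-1)) * F j k
        = 2/(2+μ) * d i ^ (-σ) * ∑ j, W i j * (d j ^(σ-1) * F j k) := by
      rw [Finset.mul_sum]; exact Finset.sum_congr rfl (fun j _ => by ring)
    rw [e1] at h2
    have hne : (2+μ) ≠ 0 := ne_of_gt h2μ
    field_simp at h2
    have hs : ∑ x, W i x * d x ^ (σ - 1) * F x k = ∑ j, W i j * (d j ^ (σ-1) * F j k) :=
      Finset.sum_congr rfl fun j _ => by ring
    rw [hs] at h2
    linear_combination (d i ^ σ) * h2 + (2 * ∑ j, W i j * (d j ^ (σ-1) * F j k)) * rp3 i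
  -- swap trick
  have swap : ∀ (f : Fin N → Fin N → ℝ),
      ∑ i, ∑ j, W i j * f i j = ∑ i, ∑ j, W i j * f j i := by
    intro f
    rw [Finset.sum_comm]
    exact Finset.sum_congr rfl fun i _ => Finset.sum_congr rfl fun j _ => by rw [symmW]
  -- cross term vanishes
  have cross : ∀ H : Matrix (Fin N) (Fin K) ℝ,
      2 * (∑ i, ∑ j, W i j * ∑ k,
          (d i ^ (σ-1) * F i k - d j ^ (σ-1) * F j k)
          * (d i ^ (σ-1) * H i k - d j ^ (σ-1) * H j k))
      + 2 * μ * ∑ i, d i ^ (2*σ-1) * ∑ k, (F i k - Y i k) * H i k = 0 := by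
    intro H
    -- split T into two halves, equal by symmetry
    have step1 : (∑ i, ∑ j, W i j * ∑ k,
          (d i ^ (σ-1) * F i k - d j ^ (σ-1) * F j k)
          * (d i ^ (σ-1) * H i k - d j ^ (σ-1) * H j k))
        = 2 * ∑ i, ∑ j, W i j * ∑ k,
          (d i ^ (σ-1) * H i k) * (d i ^ (σ-1) * F i k - d j ^ (σ-1) * F j k) := by
      have e : ∀ i j, W i j * (∑ k,
            (d i ^ (σ-1) * F i k - d j ^ (σ-1) * F j k)
            * (d i ^ (σ-1) * H i k - d j ^ (σ-1) * H j k))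
          = W i j * (∑ k, (d i ^ (σ-1) * H i k) * (d i ^ (σ-1) * F i k - d j ^ (σ-1) * F j k))
          + W i j * (∑ k, (d j ^ (σ-1) * H j k) * (d j ^ (σ-1) * F j k - d i ^ (σ-1) * F i k)) := by
        intro i j
        rw [← mul_add, ← Finset.sum_add_distrib]
        exact congrArg _ (Finset.sum_congr rfl fun k _ => by ring)
      calc (∑ i, ∑ j, W i j * ∑ k,
            (d i ^ (σ-1) * F i k - d j ^ (σ-1) * F j k)
            * (d i ^ (σ-1) * H i k - d j ^ (σ-1) * H j k))
          = (∑ i, ∑ j, (W i j * (∑ k, (d i ^ (σ-1) * H i k) * (d i ^ (σ-1) * F i k - d j ^ (σ-1) * F j k))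
            + W i j * (∑ k, (d j ^ (σ-1) * H j k) * (d j ^ (σ-1) * F j k - d i ^ (σ-1) * F i k)))) := by
            exact Finset.sum_congr rfl fun i _ => Finset.sum_congr rfl fun j _ => e i j
        _ = (∑ i, ∑ j, W i j * (∑ k, (d i ^ (σ-1) * H i k) * (d i ^ (σ-1) * F i k - d j ^ (σ-1) * F j k)))
            + (∑ i, ∑ j, W i j * (∑ k, (d j ^ (σ-1) * H j k) * (d j ^ (σ-1) * F j k - d i ^ (σ-1) * F i k))) := by
            rw [← Finset.sum_add_distrib]
            exact Finset.sum_congr rfl fun i _ => by rw [← Finset.sum_add_distrib]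
        _ = 2 * ∑ i, ∑ j, W i j * ∑ k,
            (d i ^ (σ-1) * H i k) * (d i ^ (σ-1) * F i k - d j ^ (σ-1) * F j k) := by
            rw [swap (fun i j => ∑ k, (d j ^ (σ-1) * H j k) * (d j ^ (σ-1) * F j k - d i ^ (σ-1) * F i k))]
            ring
    -- evaluate the half sum
    have step2 : (∑ i, ∑ j, W i j * ∑ k,
          (d i ^ (σ-1) * H i k) * (d i ^ (σ-1) * F i k - d j ^ (σ-1) * F j k))
        = ∑ i, ∑ k, (d i ^ (σ-1) * H i k)
            * (d i ^ σ * F i k - ∑ j, W i j * (d j ^ (σ-1) * F j k)) := by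
      refine Finset.sum_congr rfl fun i _ => ?_
      calc (∑ j, W i j * ∑ k,
            (d i ^ (σ-1) * H i k) * (d i ^ (σ-1) * F i k - d j ^ (σ-1) * F j k))
          = ∑ j, ∑ k, (W i j * ((d i ^ (σ-1) * H i k) * (d i ^ (σ-1) * F i k))
              - (d i ^ (σ-1) * H i k) * (W i j * (d j ^ (σ-1) * F j k))) := by
            refine Finset.sum_congr rfl fun j _ => ?_
            rw [Finset.mul_sum]
            exact Finset.sum_congr rfl fun k _ => by ring
        _ = ∑ k, ∑ j, (W i j * ((d i ^ (σ-1) * H i k) * (d i ^ (σ-1) * F i k))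
              - (d i ^ (σ-1) * H i k) * (W i j * (d j ^ (σ-1) * F j k))) := Finset.sum_comm
        _ = ∑ k, ((∑ j, W i j) * ((d i ^ (σ-1) * H i k) * (d i ^ (σ-1) * F i k))
              - (d i ^ (σ-1) * H i k) * ∑ j, W i j * (d j ^ (σ-1) * F j k)) := by
            refine Finset.sum_congr rfl fun k _ => ?_
            rw [Finset.sum_sub_distrib, ← Finset.sum_mul, ← Finset.mul_sum]
        _ = ∑ k, (d i ^ (σ-1) * H i k)
              * (d i ^ σ * F i k - ∑ j, W i j * (d j ^ (σ-1) * F j k)) := by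
            refine Finset.sum_congr rfl fun k _ => ?_
            rw [← hd i]
            linear_combination (d i ^ (σ-1) * H i k * F i k) * rp1 i
    rw [step1, step2]
    have muterm : (∑ i, d i ^ (2*σ-1) * ∑ k, (F i k - Y i k) * H i k)
        = ∑ i, ∑ k, d i ^ (2*σ-1) * ((F i k - Y i k) * H i k) := by
      exact Finset.sum_congr rfl fun i _ => Finset.mul_sum _ _ _
    rw [muterm]
    have comb : ∀ (i : Fin N) (k : Fin K),
        2 * (2 * ((d i ^ (σ-1) * H i k)
            * (d i ^ σ * F i k - ∑ j, W i j * (d j ^ (σ-1) * F j k))))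
        + 2 * μ * (d i ^ (2*σ-1) * ((F i k - Y i k) * H i k)) = 0 := by
      intro i k
      linear_combination (2 * d i ^ (σ-1) * H i k) * stat i k
        - (2 * μ * (F i k - Y i k) * H i k) * rp2 i
    calc 2 * (2 * ∑ i, ∑ k, (d i ^ (σ-1) * H i k)
            * (d i ^ σ * F i k - ∑ j, W i j * (d j ^ (σ-1) * F j k)))
          + 2 * μ * ∑ i, ∑ k, d i ^ (2*σ-1) * ((F i k - Y i k) * H i k)
        = ∑ i, ∑ k, (2 * (2 * ((d i ^ (σ-1) * H i k)
            * (d i ^ σ * F i k - ∑ j, W i j * (d j ^ (σ-1) * F j k))))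
          + 2 * μ * (d i ^ (2*σ-1) * ((F i k - Y i k) * H i k))) := by
          simp only [Finset.mul_sum, ← Finset.sum_add_distrib]
      _ = 0 := Finset.sum_eq_zero fun i _ => Finset.sum_eq_zero fun k _ => comb i k
  -- the completed-square identity
  have key : ∀ G : Matrix (Fin N) (Fin K) ℝ,
      Q G = Q F
        + ((∑ i, ∑ j, W i j * ∑ k,
            (d i ^ (σ-1) * (G i k - F i k) - d j ^ (σ-1) * (G j k - F j k)) ^ 2)
          + μ * ∑ i, d i ^ (2*σ-1) * ∑ k, (G i k - F i k) ^ 2) := by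
    intro G
    have hC := cross (G - F)
    simp only [Matrix.sub_apply] at hC
    rw [hQ G, hQ F]
    have inner1 : ∀ i j : Fin N,
        (∑ k, (d i ^ (σ-1) * G i k - d j ^ (σ-1) * G j k) ^ 2)
        = (∑ k, (d i ^ (σ-1) * F i k - d j ^ (σ-1) * F j k) ^ 2)
        + (∑ k, (d i ^ (σ-1) * (G i k - F i k) - d j ^ (σ-1) * (G j k - F j k)) ^ 2)
        + (∑ k, (d i ^ (σ-1) * F i k - d j ^ (σ-1) * F j k)
            * (d i ^ (σ-1) * (G i k - F i k) - d j ^ (σ-1) * (G j k - F j k))) * 2 := by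
      intro i j
      rw [Finset.sum_mul, ← Finset.sum_add_distrib, ← Finset.sum_add_distrib]
      exact Finset.sum_congr rfl fun k _ => by ring
    have e1 : (∑ i, ∑ j, W i j * ∑ k, (d i ^ (σ-1) * G i k - d j ^ (σ-1) * G j k) ^ 2)
        = (∑ i, ∑ j, W i j * ∑ k, (d i ^ (σ-1) * F i k - d j ^ (σ-1) * F j k) ^ 2)
        + (∑ i, ∑ j, W i j * ∑ k,
            (d i ^ (σ-1) * (G i k - F i k) - d j ^ (σ-1) * (G j k - F j k)) ^ 2)
        + (∑ i, ∑ j, W i j * ∑ k,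
            (d i ^ (σ-1) * F i k - d j ^ (σ-1) * F j k)
            * (d i ^ (σ-1) * (G i k - F i k) - d j ^ (σ-1) * (G j k - F j k))) * 2 := by
      calc (∑ i, ∑ j, W i j * ∑ k, (d i ^ (σ-1) * G i k - d j ^ (σ-1) * G j k) ^ 2)
          = ∑ i, ∑ j,
            (W i j * (∑ k, (d i ^ (σ-1) * F i k - d j ^ (σ-1) * F j k) ^ 2)
            + W i j * (∑ k, (d i ^ (σ-1) * (G i k - F i k) - d j ^ (σ-1) * (G j k - F j k)) ^ 2)
            + (W i j * ∑ k, (d i ^ (σ-1) * F i k - d j ^ (σ-1) * F j k)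
                * (d i ^ (σ-1) * (G i k - F i k) - d j ^ (σ-1) * (G j k - F j k))) * 2) := by
            refine Finset.sum_congr rfl fun i _ => Finset.sum_congr rfl fun j _ => ?_
            rw [inner1 i j]; ring
        _ = _ := by simp only [Finset.sum_add_distrib, ← Finset.sum_mul]
    have inner2 : ∀ i : Fin N,
        (∑ k, (G i k - Y i k) ^ 2)
        = (∑ k, (F i k - Y i k) ^ 2) + (∑ k, (G i k - F i k) ^ 2)
          + (∑ k, (F i k - Y i k) * (G i k - F i k)) * 2 := by
      intro i
      rw [Finset.sum_mul, ← Finset.sum_add_distrib, ← Finset.sum_add_distrib]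
      exact Finset.sum_congr rfl fun k _ => by ring
    have e2 : (∑ i, d i ^ (2*σ-1) * ∑ k, (G i k - Y i k) ^ 2)
        = (∑ i, d i ^ (2*σ-1) * ∑ k, (F i k - Y i k) ^ 2)
        + (∑ i, d i ^ (2*σ-1) * ∑ k, (G i k - F i k) ^ 2)
        + (∑ i, d i ^ (2*σ-1) * ∑ k, (F i k - Y i k) * (G i k - F i k)) * 2 := by
      calc (∑ i, d i ^ (2*σ-1) * ∑ k, (G i k - Y i k) ^ 2)
          = ∑ i, (d i ^ (2*σ-1) * (∑ k, (F i k - Y i k) ^ 2)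
            + d i ^ (2*σ-1) * (∑ k, (G i k - F i k) ^ 2)
            + (d i ^ (2*σ-1) * ∑ k, (F i k - Y i k) * (G i k - F i k)) * 2) := by
            refine Finset.sum_congr rfl fun i _ => ?_
            rw [inner2 i]; ring
        _ = _ := by simp only [Finset.sum_add_distrib, ← Finset.sum_mul]
    rw [e1, e2]
    linarith [hC]
  have Rnn : ∀ G : Matrix (Fin N) (Fin K) ℝ,
      0 ≤ (∑ i, ∑ j, W i j * ∑ k,
          (d i ^ (σ-1) * (G i k - F i k) - d j ^ (σ-1) * (G j k - F j k)) ^ 2) := by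
    intro G
    refine Finset.sum_nonneg fun i _ => Finset.sum_nonneg fun j _ => ?_
    exact mul_nonneg (hWnonneg i j) (Finset.sum_nonneg fun k _ => sq_nonneg _)
  have Snn : ∀ G : Matrix (Fin N) (Fin K) ℝ,
      0 ≤ ∑ i, d i ^ (2*σ-1) * ∑ k, (G i k - F i k) ^ 2 := by
    intro G
    exact Finset.sum_nonneg fun i _ =>
      mul_nonneg (rpc i).le (Finset.sum_nonneg fun k _ => sq_nonneg _)
  constructor
  · intro G
    rw [key G]
    have := Rnn G
    have := Snn G
    nlinarith [mul_nonneg hμ.le (Snn G)]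
  · intro G hm
    have h1 : Q G ≤ Q F := hm F
    rw [key G] at h1
    have h2 : μ * ∑ i, d i ^ (2*σ-1) * ∑ k, (G i k - F i k) ^ 2 ≤ 0 := by
      have := Rnn G
      linarith
    have h3 : ∑ i, d i ^ (2*σ-1) * ∑ k, (G i k - F i k) ^ 2 = 0 := by
      have := Snn G
      nlinarith
    have h4 : ∀ i, i ∈ (Finset.univ : Finset (Fin N)) →
        d i ^ (2*σ-1) * ∑ k, (G i k - F i k) ^ 2 = 0 := by
      refine (Finset.sum_eq_zero_iff_of_nonneg fun i _ => ?_).mp h3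
      exact mul_nonneg (rpc i).le (Finset.sum_nonneg fun k _ => sq_nonneg _)
    ext i k
    have h5 : ∑ k, (G i k - F i k) ^ 2 = 0 := by
      have := h4 i (Finset.mem_univ i)
      have hne := (rpc i).ne'
      exact (mul_eq_zero.mp this).resolve_left hne
    have h6 : (G i k - F i k) ^ 2 = 0 :=
      (Finset.sum_eq_zero_iff_of_nonneg fun k _ => sq_nonneg _).mp h5 k (Finset.mem_univ k)
    have := pow_eq_zero_iff (n := 2) (by norm_num) |>.mp h6
    linarith [sub_eq_zero.mp this]
end

section
/- A matrix F satisfies the first-order optimality condition of the generalized objective if and only if F_{·k}^T (2I − 2 D^{σ−1} W D^{−σ} + μ I) = μ Y_{·k}^T for every k, i.e., ((2+μ) I − 2 D^{σ−1} W D^{−σ})^T F_{·k} = μ Y_{·k}. -/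
open Matrix Finset

/-- A matrix `F` satisfies the first-order optimality condition of the
generalized objective (all directional derivatives of `Q` at `F` vanish) if and only if
`((2+μ) I − 2 D^{σ−1} W D^{−σ})ᵀ F_{·k} = μ Y_{·k}` for every `k`. -/
theorem generalized_first_order_condition
    (N K : ℕ) (W : Matrix (Fin N) (Fin N) ℝ)
    (hWsym : W.IsSymm) (hWnonneg : ∀ i j, 0 ≤ W i j)
    (d : Fin N → ℝ) (hd : ∀ i, d i = ∑ j, W i j) (hdpos : ∀ i, 0 < d i)
    (σ μ : ℝ) (hμ : 0 < μ) (Y : Matrix (Fin N) (Fin K) ℝ)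
    (Q : Matrix (Fin N) (Fin K) ℝ → ℝ)
    (hQ : ∀ F, Q F =
      2 * ∑ k, (fun i => F i k) ⬝ᵥ
          ((Matrix.diagonal (fun i => d i ^ (σ - 1)) * (Matrix.diagonal d - W) *
            Matrix.diagonal (fun i => d i ^ (σ - 1))) *ᵥ (fun i => F i k))
      + μ * ∑ k, (fun i => F i k - Y i k) ⬝ᵥ
          ((Matrix.diagonal (fun i => d i ^ (2 * σ - 1))) *ᵥ (fun i => F i k - Y i k)))
    (F : Matrix (Fin N) (Fin K) ℝ) :
    (∀ V : Matrix (Fin N) (Fin K) ℝ, deriv (fun t : ℝ => Q (F + t • V)) 0 = 0)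
    ↔ ∀ k, ((2 + μ) • (1 : Matrix (Fin N) (Fin N) ℝ)
          - 2 • (Matrix.diagonal (fun i => d i ^ (σ - 1)) * W *
              Matrix.diagonal (fun i => d i ^ (-σ))))ᵀ *ᵥ (fun i => F i k)
        = μ • (fun i => Y i k) := by
  set Dσ := Matrix.diagonal (fun i => d i ^ (σ - 1)) with hDσ
  set A := Dσ * (Matrix.diagonal d - W) * Dσ with hA
  set B := Matrix.diagonal (fun i => d i ^ (2 * σ - 1)) with hB
  set M := ((2 + μ) • (1 : Matrix (Fin N) (Fin N) ℝ)
      - 2 • (Dσ * W * Matrix.diagonal (fun i => d i ^ (-σ)))) with hM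
  have hAsym : Aᵀ = A := by
    rw [hA, Matrix.transpose_mul, Matrix.transpose_mul, Matrix.transpose_sub,
      Matrix.diagonal_transpose, Matrix.diagonal_transpose, hWsym.eq, Matrix.mul_assoc]
  have hBsym : Bᵀ = B := Matrix.diagonal_transpose _
  have hsymdot : ∀ (C : Matrix (Fin N) (Fin N) ℝ), Cᵀ = C →
      ∀ x y : Fin N → ℝ, x ⬝ᵥ (C *ᵥ y) = y ⬝ᵥ (C *ᵥ x) := by
    intro C hC x y
    rw [Matrix.dotProduct_mulVec, ← Matrix.mulVec_transpose, hC, dotProduct_comm]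
  have expand : ∀ (C : Matrix (Fin N) (Fin N) ℝ), Cᵀ = C →
      ∀ (x y : Fin N → ℝ) (t : ℝ),
      (x + t • y) ⬝ᵥ (C *ᵥ (x + t • y))
        = (y ⬝ᵥ (C *ᵥ y)) * t ^ 2 + (2 * (y ⬝ᵥ (C *ᵥ x))) * t + x ⬝ᵥ (C *ᵥ x) := by
    intro C hC x y t
    rw [Matrix.mulVec_add, Matrix.mulVec_smul]
    simp only [dotProduct_add, add_dotProduct, dotProduct_smul,
      smul_dotProduct, smul_eq_mul]
    rw [hsymdot C hC x y]
    ring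
  set g : Fin K → Fin N → ℝ := fun k =>
    (4 : ℝ) • (A *ᵥ fun i => F i k) + (2 * μ) • (B *ᵥ fun i => F i k - Y i k) with hg
  have hderiv : ∀ V : Matrix (Fin N) (Fin K) ℝ,
      HasDerivAt (fun t : ℝ => Q (F + t • V)) (∑ k, (fun i => V i k) ⬝ᵥ g k) 0 := by
    intro V
    set a : ℝ := 2 * ∑ k, (fun i => V i k) ⬝ᵥ (A *ᵥ fun i => V i k)
        + μ * ∑ k, (fun i => V i k) ⬝ᵥ (B *ᵥ fun i => V i k) with ha
    set b : ℝ := ∑ k, (fun i => V i k) ⬝ᵥ g k with hb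
    have hfun : (fun t : ℝ => Q (F + t • V)) = fun t => a * t ^ 2 + (b * t + Q F) := by
      funext t
      rw [hQ (F + t • V), hQ F]
      have hcolF : ∀ k, (fun i => (F + t • V) i k)
          = (fun i => F i k) + t • (fun i => V i k) := by
        intro k; funext i
        simp [Matrix.add_apply, Matrix.smul_apply]
      have hcolY : ∀ k, (fun i => (F + t • V) i k - Y i k)
          = (fun i => F i k - Y i k) + t • (fun i => V i k) := by
        intro k; funext i
        simp [Matrix.add_apply, Matrix.smul_apply]
        ring
      simp only [hcolF, hcolY, expand A hAsym, expand B hBsym, hb, hg,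
        dotProduct_add, dotProduct_smul, smul_eq_mul,
        Finset.sum_add_distrib, ← Finset.sum_mul, ← Finset.mul_sum]
      ring
    rw [hfun]
    have h1 : HasDerivAt (fun t : ℝ => a * t ^ 2 + (b * t + Q F))
        (a * ((2 : ℕ) * 0 ^ (2 - 1)) + (b * 1 + 0)) 0 :=
      ((hasDerivAt_pow 2 (0 : ℝ)).const_mul a).add
        (((hasDerivAt_id 0).const_mul b).add (hasDerivAt_const 0 (Q F)))
    simpa using h1
  -- matrix identity
  have hmat : (4 : ℝ) • A + (2 * μ) • B = (2 : ℝ) • (B * Mᵀ) := by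
    ext i j
    have h1 : d i ^ (σ - 1) * d i ^ (σ - 1) * d i = d i ^ (2 * σ - 1) := by
      rw [show (2*σ-1) = (σ-1)+(σ-1)+1 by ring, Real.rpow_add (hdpos i),
        Real.rpow_add (hdpos i), Real.rpow_one]
    have h2 : d i ^ (2 * σ - 1) * d i ^ (-σ) = d i ^ (σ - 1) := by
      rw [← Real.rpow_add (hdpos i)]
      congr 1; ring
    simp only [hA, hB, hM, hDσ, Matrix.mul_diagonal, Matrix.diagonal_mul,
      Matrix.transpose_apply, Matrix.sub_apply, Matrix.smul_apply, Matrix.add_apply,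
      Matrix.one_apply, Matrix.diagonal_apply, smul_eq_mul]
    rcases eq_or_ne i j with rfl | hij
    · simp only [if_pos rfl, eq_self_iff_true, if_true]
      linear_combination 4 * h1 + 4 * W i i * d i ^ (σ - 1) * h2
    · have hw : W j i = W i j := hWsym.apply i j
      simp only [if_neg hij, if_neg (Ne.symm hij), hw]
      linear_combination 4 * W i j * d j ^ (σ - 1) * h2
  have hkey : ∀ k, g k = (2 : ℝ) • (B *ᵥ ((Mᵀ *ᵥ fun i => F i k) - μ • fun i => Y i k)) := by
    intro k
    have h1 := congrArg (fun X : Matrix (Fin N) (Fin N) ℝ => X *ᵥ (fun i => F i k)) hmat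
    simp only [Matrix.add_mulVec, Matrix.smul_mulVec, ← Matrix.mulVec_mulVec] at h1
    rw [hg]
    have hsub : (fun i => F i k - Y i k) = (fun i => F i k) - (fun i => Y i k) := rfl
    simp only [smul_sub, Matrix.mulVec_smul]
    rw [hsub, Matrix.mulVec_sub, smul_sub, ← add_sub_assoc, h1]
    simp only [Matrix.mulVec_sub, Matrix.mulVec_smul, ← Matrix.mulVec_mulVec, smul_sub,
      smul_smul]
  have hBinj : ∀ x : Fin N → ℝ, B *ᵥ x = 0 → x = 0 := by
    intro x hx
    funext i
    have := congrFun hx i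
    rw [hB, Matrix.mulVec_diagonal] at this
    have hne : d i ^ (2 * σ - 1) ≠ 0 := (Real.rpow_pos_of_pos (hdpos i) _).ne'
    simpa [hne] using this
  constructor
  · intro h k
    have hgz : g k = 0 := by
      funext i
      have hb := (hderiv (Matrix.single i k 1)).deriv
      rw [h (Matrix.single i k 1)] at hb
      -- hb : ∑ k', (fun i' => stdBasisMatrix i k 1 i' k') ⬝ᵥ g k' = 0  (reversed)
      have : (∑ k', (fun i' => Matrix.single i k 1 i' k') ⬝ᵥ g k') = g k i := by
        simp [Matrix.single_apply, dotProduct, ite_and]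
      rw [this] at hb
      simpa using hb.symm
    have := hkey k
    rw [hgz] at this
    have h2 : B *ᵥ ((Mᵀ *ᵥ fun i => F i k) - μ • fun i => Y i k) = 0 := by
      have h2' : (2:ℝ) • (B *ᵥ ((Mᵀ *ᵥ fun i => F i k) - μ • fun i => Y i k)) = 0 := this.symm
      rcases smul_eq_zero.mp h2' with hc | hx
      · norm_num at hc
      · exact hx
    have h3 := hBinj _ h2
    have h4 : (Mᵀ *ᵥ fun i => F i k) = μ • fun i => Y i k := by
      rwa [sub_eq_zero] at h3
    exact h4
  · intro h V
    have hgz : ∀ k, g k = 0 := by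
      intro k
      rw [hkey k, h k, sub_self, Matrix.mulVec_zero, smul_zero]
    have hb : (∑ k, (fun i => V i k) ⬝ᵥ g k) = 0 := by
      simp [hgz]
    rw [(hderiv V).deriv]
    exact hb
end

section
/- For a row-stochastic matrix P with unique stationary distribution π, the matrix I − P + 1π (where 1 is the all-ones column vector and π the stationary row vector) is invertible, and the deviation matrix H = (I − P + 1π)^{−1} − 1π satisfies H1 = 0 and πH = 0. -/
open Matrix Finset

/-- For a row-stochastic matrix `P` with unique stationary distribution `π`,
the matrix `I − P + 1π` is invertible, and the deviation matrix
`H = (I − P + 1π)⁻¹ − 1π` satisfies `H1 = 0` and `πH = 0`. -/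
theorem deviation_matrix_properties
    (N : ℕ) (P : Matrix (Fin N) (Fin N) ℝ)
    (hPnonneg : ∀ i j, 0 ≤ P i j) (hProw : ∀ i, ∑ j, P i j = 1)
    (π : Fin N → ℝ)
    (hπnonneg : ∀ i, 0 ≤ π i) (hπsum : ∑ i, π i = 1) (hπstat : π ᵥ* P = π)
    (hπuniq : ∀ π' : Fin N → ℝ,
      (∀ i, 0 ≤ π' i) → (∑ i, π' i = 1) → π' ᵥ* P = π' → π' = π)
    (Pi1 H : Matrix (Fin N) (Fin N) ℝ)
    (hPi1 : Pi1 = Matrix.of (fun _ j => π j))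
    (hH : H = (1 - P + Pi1)⁻¹ - Pi1) :
    IsUnit (1 - P + Pi1) ∧ H *ᵥ (fun _ => (1 : ℝ)) = 0 ∧ (fun i => π i) ᵥ* H = 0 := by
  subst hPi1 hH
  set A : Matrix (Fin N) (Fin N) ℝ :=
    1 - P + Matrix.of (fun _ j => π j) with hAdef
  -- sums of vecMul with P are preserved
  have sumP : ∀ z : Fin N → ℝ, ∑ j, (z ᵥ* P) j = ∑ i, z i := by
    intro z
    simp only [Matrix.vecMul, dotProduct]
    rw [Finset.sum_comm]
    simp [← Finset.mul_sum, hProw]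
  -- the left kernel of A is trivial
  have hker : ∀ y : Fin N → ℝ, y ᵥ* A = 0 → y = 0 := by
    intro y hy
    -- rewrite the kernel equation
    have expand : ∀ j, y j - (y ᵥ* P) j + (∑ i, y i) * π j = 0 := by
      intro j
      have := congrFun hy j
      simp only [hAdef, Matrix.vecMul, dotProduct, Matrix.add_apply,
        Matrix.sub_apply, Matrix.one_apply, Matrix.of_apply, Pi.zero_apply] at this
      rw [← this]
      simp only [mul_sub, mul_add, Finset.sum_add_distrib, Finset.sum_sub_distrib,
        mul_ite, mul_one, mul_zero, Finset.sum_ite_eq', Finset.mem_univ, if_true,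
        Matrix.vecMul, dotProduct, Finset.sum_mul]
    -- sum of y is zero
    have hsumy : ∑ i, y i = 0 := by
      have h0 : ∑ j, (y j - (y ᵥ* P) j + (∑ i, y i) * π j) = 0 := by
        simp [expand]
      rw [Finset.sum_add_distrib, Finset.sum_sub_distrib, sumP, ← Finset.mul_sum,
        hπsum, mul_one, sub_self, zero_add] at h0
      exact h0
    -- y is stationary
    have hystat : ∀ j, (y ᵥ* P) j = y j := by
      intro j
      have := expand j
      rw [hsumy, zero_mul, add_zero, sub_eq_zero] at this
      exact this.symm
    -- the absolute value vector
    set a : Fin N → ℝ := fun i => |y i| with ha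
    have haP : ∀ j, (a ᵥ* P) j = ∑ i, |y i| * P i j := by
      intro j; simp [Matrix.vecMul, dotProduct, ha]
    have hle : ∀ j, a j ≤ (a ᵥ* P) j := by
      intro j
      rw [haP]
      calc a j = |(y ᵥ* P) j| := by rw [hystat]
        _ = |∑ i, y i * P i j| := by simp [Matrix.vecMul, dotProduct]
        _ ≤ ∑ i, |y i * P i j| := Finset.abs_sum_le_sum_abs _ _
        _ = ∑ i, |y i| * P i j := by
            refine Finset.sum_congr rfl fun i _ => ?_
            rw [abs_mul, abs_of_nonneg (hPnonneg i j)]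
    have hsuma : ∑ j, (a ᵥ* P) j = ∑ j, a j := sumP a
    -- a is stationary
    have hastat : ∀ j, (a ᵥ* P) j = a j := by
      have := (Finset.sum_eq_sum_iff_of_le (fun j _ => hle j)).mp hsuma.symm
      intro j
      exact ((this j (Finset.mem_univ j))).symm
    -- sum of a
    set s : ℝ := ∑ i, a i with hs
    have hsnonneg : 0 ≤ s := Finset.sum_nonneg fun i _ => abs_nonneg _
    rcases eq_or_lt_of_le hsnonneg with hs0 | hspos
    · -- s = 0 ⇒ y = 0
      funext i
      have hz : ∀ i ∈ Finset.univ, |y i| = 0 :=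
        (Finset.sum_eq_zero_iff_of_nonneg (fun i _ => abs_nonneg (y i))).mp hs0.symm
      show y i = 0
      exact abs_eq_zero.mp (hz i (Finset.mem_univ i))
    · -- s > 0 : use uniqueness twice
      have hsne : s ≠ 0 := ne_of_gt hspos
      have h1 : (fun i => s⁻¹ * a i) = π := by
        apply hπuniq
        · intro i; exact mul_nonneg (inv_nonneg.mpr hsnonneg) (abs_nonneg _)
        · rw [← Finset.mul_sum, ← hs, inv_mul_cancel₀ hsne]
        · funext j
          simp only [Matrix.vecMul, dotProduct]
          rw [show ∑ i, s⁻¹ * a i * P i j = s⁻¹ * ∑ i, a i * P i j by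
            rw [Finset.mul_sum]; exact Finset.sum_congr rfl fun i _ => by ring]
          have := hastat j
          simp only [Matrix.vecMul, dotProduct] at this
          rw [this]
      have h2 : (fun i => s⁻¹ * (y i + a i)) = π := by
        apply hπuniq
        · intro i
          refine mul_nonneg (inv_nonneg.mpr hsnonneg) ?_
          have hni := neg_abs_le (y i)
          show 0 ≤ y i + |y i|
          linarith
        · rw [← Finset.mul_sum, Finset.sum_add_distrib, hsumy, zero_add, ← hs,
            inv_mul_cancel₀ hsne]
        · funext j
          simp only [Matrix.vecMul, dotProduct]
          rw [show ∑ i, s⁻¹ * (y i + a i) * P i j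
              = s⁻¹ * ((∑ i, y i * P i j) + ∑ i, a i * P i j) by
            rw [← Finset.sum_add_distrib, Finset.mul_sum]
            exact Finset.sum_congr rfl fun i _ => by ring]
          have h3 := hastat j
          have h4 := hystat j
          simp only [Matrix.vecMul, dotProduct] at h3 h4
          rw [h3, h4]
      funext i
      have h5 := congrFun (h1.trans h2.symm) i
      have h6 : a i = y i + a i := by
        have := mul_left_cancel₀ (inv_ne_zero hsne) h5
        exact this
      show y i = 0
      linarith
  -- invertibility
  have hdet : A.det ≠ 0 := by
    intro hd
    obtain ⟨v, hvne, hv⟩ := Matrix.exists_vecMul_eq_zero_iff.mpr hd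
    exact hvne (hker v hv)
  have hunit : IsUnit A := (Matrix.isUnit_iff_isUnit_det A).mpr (isUnit_iff_ne_zero.mpr hdet)
  have hudet : IsUnit A.det := isUnit_iff_ne_zero.mpr hdet
  refine ⟨hunit, ?_, ?_⟩
  · -- H *ᵥ 1 = 0
    have hA1 : A *ᵥ (fun _ => (1 : ℝ)) = fun _ => (1 : ℝ) := by
      funext i
      simp only [hAdef, Matrix.mulVec, dotProduct, Matrix.add_apply,
        Matrix.sub_apply, Matrix.one_apply, Matrix.of_apply, mul_one]
      rw [Finset.sum_add_distrib, Finset.sum_sub_distrib, hProw, hπsum]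
      simp [Finset.sum_ite_eq]
    have hAinv1 : A⁻¹ *ᵥ (fun _ => (1 : ℝ)) = fun _ => (1 : ℝ) := by
      conv_lhs => rw [← hA1]
      rw [Matrix.mulVec_mulVec, Matrix.nonsing_inv_mul A hudet, Matrix.one_mulVec]
    have hPi11 : (Matrix.of (fun _ j => π j) : Matrix (Fin N) (Fin N) ℝ) *ᵥ
        (fun _ => (1 : ℝ)) = fun _ => (1 : ℝ) := by
      funext i
      simp [Matrix.mulVec, dotProduct, hπsum]
    rw [Matrix.sub_mulVec, hAinv1, hPi11, sub_self]
  · -- π ᵥ* H = 0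
    have hπA : (fun i => π i) ᵥ* A = fun i => π i := by
      funext j
      simp only [hAdef, Matrix.vecMul, dotProduct, Matrix.add_apply,
        Matrix.sub_apply, Matrix.one_apply, Matrix.of_apply]
      have hstat := congrFun hπstat j
      simp only [Matrix.vecMul, dotProduct] at hstat
      rw [show ∑ i, π i * ((if i = j then (1:ℝ) else 0) - P i j + π j)
          = (∑ i, π i * (if i = j then (1:ℝ) else 0)) - (∑ i, π i * P i j)
            + (∑ i, π i) * π j by
        rw [← Finset.sum_sub_distrib, Finset.sum_mul, ← Finset.sum_add_distrib]
        exact Finset.sum_congr rfl fun i _ => by ring]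
      rw [hstat, hπsum]
      simp [Finset.sum_ite_eq']
    have hπAinv : (fun i => π i) ᵥ* A⁻¹ = fun i => π i := by
      conv_lhs => rw [← hπA]
      rw [Matrix.vecMul_vecMul, Matrix.mul_nonsing_inv A hudet, Matrix.vecMul_one]
    have hπPi1 : (fun i => π i) ᵥ* (Matrix.of (fun _ j => π j) : Matrix (Fin N) (Fin N) ℝ)
        = fun i => π i := by
      funext j
      simp [Matrix.vecMul, dotProduct, ← Finset.sum_mul, hπsum]
    rw [Matrix.vecMul_sub, hπAinv, hπPi1, sub_self]
end

section
/- As α → 1⁻, the generalized classification function F_{·k} = (1−α)(I − α D^{−σ} W D^{σ−1})^{−1} Y_{·k} converges to the vector whose i-th component is d_i^{1−σ} · (1^T D 1)^{−1} · Σ_{j : Y_{jk}=1} d_j^{σ}; consequently, the limiting classification of every node is determined by the class k maximizing Σ_{j labeled k} d_j^{σ}. -/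
open Matrix Finset Filter Topology

namespace LimClass

variable {N : ℕ}


lemma mulVec_le (hne : (univ : Finset (Fin N)).Nonempty) (R : Matrix (Fin N) (Fin N) ℝ)
    (h0 : ∀ i j, 0 ≤ R i j) (x : Fin N → ℝ) (i : Fin N) :
    (R *ᵥ x) i ≤ (∑ j, R i j) * univ.sup' hne x := by
  calc (R *ᵥ x) i = ∑ j, R i j * x j := by simp [Matrix.mulVec, dotProduct]
  _ ≤ ∑ j, R i j * univ.sup' hne x := Finset.sum_le_sum fun j _ =>
      mul_le_mul_of_nonneg_left (Finset.le_sup' x (mem_univ j)) (h0 i j)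
  _ = (∑ j, R i j) * univ.sup' hne x := by rw [Finset.sum_mul]

lemma le_mulVec (hne : (univ : Finset (Fin N)).Nonempty) (R : Matrix (Fin N) (Fin N) ℝ)
    (h0 : ∀ i j, 0 ≤ R i j) (x : Fin N → ℝ) (i : Fin N) :
    (∑ j, R i j) * univ.inf' hne x ≤ (R *ᵥ x) i := by
  calc (∑ j, R i j) * univ.inf' hne x = ∑ j, R i j * univ.inf' hne x := by rw [Finset.sum_mul]
  _ ≤ ∑ j, R i j * x j := Finset.sum_le_sum fun j _ =>
      mul_le_mul_of_nonneg_left (Finset.inf'_le x (mem_univ j)) (h0 i j)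
  _ = (R *ᵥ x) i := by simp [Matrix.mulVec, dotProduct]


variable {N : ℕ}

lemma pow_nonneg' (Q : Matrix (Fin N) (Fin N) ℝ) (h0 : ∀ i j, 0 ≤ Q i j) (n : ℕ) :
    ∀ i j, 0 ≤ (Q ^ n) i j := by
  induction n with
  | zero => intro i j; by_cases h : i = j <;> simp [h, Matrix.one_apply]
  | succ n ih =>
      intro i j
      rw [pow_succ, Matrix.mul_apply]
      exact Finset.sum_nonneg fun k _ => mul_nonneg (ih i k) (h0 k j)

lemma pow_rowsum (Q : Matrix (Fin N) (Fin N) ℝ) (h1 : ∀ i, ∑ j, Q i j = 1) (n : ℕ) :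
    ∀ i, ∑ j, (Q ^ n) i j = 1 := by
  induction n with
  | zero => intro i; simp [Matrix.one_apply]
  | succ n ih =>
      intro i
      simp only [pow_succ, Matrix.mul_apply]
      rw [Finset.sum_comm]
      calc ∑ k, ∑ j, (Q ^ n) i k * Q k j = ∑ k, (Q ^ n) i k * ∑ j, Q k j := by
            simp [Finset.mul_sum]
      _ = 1 := by simp only [h1, mul_one]; exact ih i


variable {N : ℕ}

/-- one-step monotonicity of sup under a stochastic matrix -/
lemma sup_mulVec_le (hne : (univ : Finset (Fin N)).Nonempty) (Q : Matrix (Fin N) (Fin N) ℝ)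
    (h0 : ∀ i j, 0 ≤ Q i j) (h1 : ∀ i, ∑ j, Q i j = 1) (x : Fin N → ℝ) :
    univ.sup' hne (Q *ᵥ x) ≤ univ.sup' hne x := by
  refine Finset.sup'_le _ _ fun i _ => ?_
  have := mulVec_le hne Q h0 x i
  rwa [h1 i, one_mul] at this

lemma inf_le_mulVec_inf (hne : (univ : Finset (Fin N)).Nonempty) (Q : Matrix (Fin N) (Fin N) ℝ)
    (h0 : ∀ i j, 0 ≤ Q i j) (h1 : ∀ i, ∑ j, Q i j = 1) (x : Fin N → ℝ) :
    univ.inf' hne x ≤ univ.inf' hne (Q *ᵥ x) := by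
  refine Finset.le_inf' _ _ fun i _ => ?_
  have := le_mulVec hne Q h0 x i
  rwa [h1 i, one_mul] at this

/-- Dobrushin contraction -/
lemma osc_contract (hne : (univ : Finset (Fin N)).Nonempty) (Q : Matrix (Fin N) (Fin N) ℝ)
    (h1 : ∀ i, ∑ j, Q i j = 1) (δ : ℝ) (hδ : ∀ i j, δ ≤ Q i j) (x : Fin N → ℝ) :
    univ.sup' hne (Q *ᵥ x) - univ.inf' hne (Q *ᵥ x) ≤
      (1 - N * δ) * (univ.sup' hne x - univ.inf' hne x) := by
  set R : Matrix (Fin N) (Fin N) ℝ := Matrix.of fun i j => Q i j - δ with hR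
  have hR0 : ∀ i j, 0 ≤ R i j := fun i j => sub_nonneg.2 (hδ i j)
  have hRsum : ∀ i, ∑ j, R i j = 1 - N * δ := by
    intro i
    simp only [hR, Matrix.of_apply, Finset.sum_sub_distrib, h1 i, Finset.sum_const,
      Finset.card_univ, Fintype.card_fin, nsmul_eq_mul]
  have hsplit : ∀ i, (Q *ᵥ x) i = (R *ᵥ x) i + δ * ∑ j, x j := by
    intro i
    simp only [Matrix.mulVec, dotProduct, hR, Matrix.of_apply, sub_mul,
      Finset.sum_sub_distrib, Finset.mul_sum]
    ring
  have hsup : univ.sup' hne (Q *ᵥ x) ≤ (1 - N * δ) * univ.sup' hne x + δ * ∑ j, x j := by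
    refine Finset.sup'_le _ _ fun i _ => ?_
    rw [hsplit i]
    have := mulVec_le hne R hR0 x i
    rw [hRsum i] at this
    linarith
  have hinf : (1 - N * δ) * univ.inf' hne x + δ * ∑ j, x j ≤ univ.inf' hne (Q *ᵥ x) := by
    refine Finset.le_inf' _ _ fun i _ => ?_
    rw [hsplit i]
    have := le_mulVec hne R hR0 x i
    rw [hRsum i] at this
    linarith
  linarith [hsup, hinf]



/-- powers of a primitive stochastic matrix applied to a vector converge to the
stationary average -/
lemma pow_mulVec_tendsto (hne : (univ : Finset (Fin N)).Nonempty)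
    (Q : Matrix (Fin N) (Fin N) ℝ)
    (h0 : ∀ i j, 0 ≤ Q i j) (h1 : ∀ i, ∑ j, Q i j = 1)
    (m : ℕ) (hm : ∀ i j, 0 < (Q ^ m) i j)
    (w : Fin N → ℝ) (hw0 : ∀ j, 0 ≤ w j) (hw1 : ∑ j, w j = 1)
    (hwQ : ∀ j, ∑ l, w l * Q l j = w j)
    (z : Fin N → ℝ) (i : Fin N) :
    Tendsto (fun n => ((Q ^ n) *ᵥ z) i) atTop (𝓝 (∑ j, w j * z j)) := by
  -- upgrade primitivity to exponent m+1 ≥ 1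
  have hm1 : ∀ i j, 0 < (Q ^ (m + 1)) i j := by
    intro a b
    rw [pow_succ', Matrix.mul_apply]
    have hex : ∃ k ∈ (univ : Finset (Fin N)), 0 < Q a k * (Q ^ m) k b := by
      by_contra hcon
      push_neg at hcon
      have hz : ∀ k ∈ (univ : Finset (Fin N)), Q a k = 0 := by
        intro k _
        have h1' := hcon k (mem_univ k)
        have h2' := mul_nonneg (h0 a k) (hm k b).le
        have h3' : Q a k * (Q ^ m) k b = 0 := le_antisymm h1' h2'
        rcases mul_eq_zero.1 h3' with h | h
        · exact h
        · exact absurd h (ne_of_gt (hm k b))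
      have : (1 : ℝ) = 0 := by
        rw [← h1 a]
        exact Finset.sum_eq_zero hz
      norm_num at this
    exact Finset.sum_pos' (fun k _ => mul_nonneg (h0 a k) (pow_nonneg' Q h0 m k b)) hex
  set M := m + 1 with hM
  set QM := Q ^ M with hQM
  have hQM0 : ∀ i j, 0 ≤ QM i j := pow_nonneg' Q h0 M
  have hQM1 : ∀ i, ∑ j, QM i j = 1 := pow_rowsum Q h1 M
  -- the minimal entry
  set δ : ℝ := univ.inf' hne fun a => univ.inf' hne fun b => QM a b with hδdef
  have hδpos : 0 < δ := by
    rw [hδdef]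
    rw [Finset.lt_inf'_iff]
    intro a _
    rw [Finset.lt_inf'_iff]
    intro b _
    exact hm1 a b
  have hδle : ∀ a b, δ ≤ QM a b := by
    intro a b
    exact le_trans (Finset.inf'_le _ (mem_univ a)) (Finset.inf'_le _ (mem_univ b))
  set c : ℝ := 1 - N * δ with hc
  have hc0 : 0 ≤ c := by
    obtain ⟨a, _⟩ := hne
    have : (N : ℝ) * δ = ∑ _b : Fin N, δ := by
      simp [Finset.sum_const, Finset.card_univ]
    have h2' : (N : ℝ) * δ ≤ ∑ b, QM a b := by
      rw [this]; exact Finset.sum_le_sum fun b _ => hδle a b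
    rw [hQM1 a] at h2'
    linarith
  have hc1 : c < 1 := by
    have hNpos : 0 < (N : ℝ) := by
      obtain ⟨a, _⟩ := hne
      exact_mod_cast Fin.pos a
    have := mul_pos hNpos hδpos
    rw [hc]; linarith
  -- oscillation notation
  set osc : (Fin N → ℝ) → ℝ := fun x => univ.sup' hne x - univ.inf' hne x with hosc
  have hosc_nonneg : ∀ x, 0 ≤ osc x := by
    intro x
    obtain ⟨a, _⟩ := hne
    have h1' := Finset.inf'_le x (mem_univ a)
    have h2' := Finset.le_sup' x (mem_univ a)
    simp only [hosc]; linarith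
  -- monotonicity: applying Q^a does not increase osc
  have hosc_mono : ∀ (a : ℕ) (x : Fin N → ℝ), osc ((Q ^ a) *ᵥ x) ≤ osc x := by
    intro a
    induction a with
    | zero => intro x; simp [Matrix.one_mulVec]
    | succ a ih =>
        intro x
        have heq : (Q ^ (a + 1)) *ᵥ x = (Q ^ a) *ᵥ (Q *ᵥ x) := by
          rw [pow_succ, ← Matrix.mulVec_mulVec]
        rw [heq]
        refine le_trans (ih (Q *ᵥ x)) ?_
        have := sup_mulVec_le hne Q h0 h1 x
        have := inf_le_mulVec_inf hne Q h0 h1 x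
        simp only [hosc]; linarith
  -- geometric decay along multiples of M
  have hgeo : ∀ k : ℕ, osc ((QM ^ k) *ᵥ z) ≤ c ^ k * osc z := by
    intro k
    induction k with
    | zero => simp [Matrix.one_mulVec]
    | succ k ih =>
        have heq : (QM ^ (k + 1)) *ᵥ z = QM *ᵥ ((QM ^ k) *ᵥ z) := by
          rw [Matrix.mulVec_mulVec, ← pow_succ']
        rw [heq]
        have hcon := osc_contract hne QM hQM1 δ hδle ((QM ^ k) *ᵥ z)
        simp only [hosc] at hcon ⊢
        calc univ.sup' hne (QM *ᵥ ((QM ^ k) *ᵥ z)) - univ.inf' hne (QM *ᵥ ((QM ^ k) *ᵥ z))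
            ≤ c * (univ.sup' hne ((QM ^ k) *ᵥ z) - univ.inf' hne ((QM ^ k) *ᵥ z)) := hcon
        _ ≤ c * (c ^ k * (univ.sup' hne z - univ.inf' hne z)) := by
            apply mul_le_mul_of_nonneg_left _ hc0
            exact ih
        _ = c ^ (k + 1) * (univ.sup' hne z - univ.inf' hne z) := by ring
  -- invariance of the weighted average
  have havg1 : ∀ v : Fin N → ℝ, ∑ j, w j * (Q *ᵥ v) j = ∑ j, w j * v j := by
    intro v
    simp only [Matrix.mulVec, dotProduct, Finset.mul_sum]
    rw [Finset.sum_comm]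
    refine Finset.sum_congr rfl fun j _ => ?_
    simp only [← mul_assoc]
    rw [← Finset.sum_mul, hwQ j]
  have havg : ∀ n : ℕ, ∑ j, w j * ((Q ^ n) *ᵥ z) j = ∑ j, w j * z j := by
    intro n
    induction n with
    | zero => simp [Matrix.one_mulVec]
    | succ n ih =>
        have heq : (Q ^ (n + 1)) *ᵥ z = Q *ᵥ ((Q ^ n) *ᵥ z) := by
          rw [Matrix.mulVec_mulVec, ← pow_succ']
        rw [heq, havg1, ih]
  -- weighted average lies between inf and sup
  have havg_mem : ∀ v : Fin N → ℝ,
      univ.inf' hne v ≤ ∑ j, w j * v j ∧ ∑ j, w j * v j ≤ univ.sup' hne v := by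
    intro v
    constructor
    · calc univ.inf' hne v = ∑ j, w j * univ.inf' hne v := by
            rw [← Finset.sum_mul, hw1, one_mul]
      _ ≤ ∑ j, w j * v j := Finset.sum_le_sum fun j _ =>
            mul_le_mul_of_nonneg_left (Finset.inf'_le v (mem_univ j)) (hw0 j)
    · calc ∑ j, w j * v j ≤ ∑ j, w j * univ.sup' hne v := Finset.sum_le_sum fun j _ =>
            mul_le_mul_of_nonneg_left (Finset.le_sup' v (mem_univ j)) (hw0 j)
      _ = univ.sup' hne v := by rw [← Finset.sum_mul, hw1, one_mul]
  -- pointwise bound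
  have hbound : ∀ n : ℕ, |((Q ^ n) *ᵥ z) i - ∑ j, w j * z j| ≤ c ^ (n / M) * osc z := by
    intro n
    have h1' : |((Q ^ n) *ᵥ z) i - ∑ j, w j * z j| ≤ osc ((Q ^ n) *ᵥ z) := by
      rw [← havg n]
      set v := (Q ^ n) *ᵥ z
      obtain ⟨hlo, hhi⟩ := havg_mem v
      have hvi1 := Finset.le_sup' v (mem_univ i)
      have hvi2 := Finset.inf'_le v (mem_univ i)
      rw [abs_sub_le_iff]
      constructor <;> simp only [hosc] <;> linarith
    have hle : M * (n / M) ≤ n := by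
      rw [mul_comm]; exact Nat.div_mul_le_self n M
    have hsplit : n = (n - M * (n / M)) + M * (n / M) := by omega
    have h2' : osc ((Q ^ n) *ᵥ z) ≤ osc ((QM ^ (n / M)) *ᵥ z) := by
      calc osc ((Q ^ n) *ᵥ z) = osc ((Q ^ ((n - M * (n / M)) + M * (n / M))) *ᵥ z) := by
            rw [← hsplit]
      _ = osc ((Q ^ (n - M * (n / M))) *ᵥ ((Q ^ (M * (n / M))) *ᵥ z)) := by
            rw [Matrix.mulVec_mulVec, ← pow_add]
      _ ≤ osc ((Q ^ (M * (n / M))) *ᵥ z) := hosc_mono _ _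
      _ = osc ((QM ^ (n / M)) *ᵥ z) := by rw [hQM, ← pow_mul]
    exact le_trans h1' (le_trans h2' (hgeo (n / M)))
  -- squeeze
  have htend0 : Tendsto (fun n : ℕ => c ^ (n / M) * osc z) atTop (𝓝 0) := by
    have hdiv : Tendsto (fun n : ℕ => n / M) atTop atTop := by
      apply Filter.tendsto_atTop_atTop.2
      intro b
      exact ⟨b * M, fun n hn => (Nat.le_div_iff_mul_le (by omega)).2 hn⟩
    have hpow : Tendsto (fun k : ℕ => c ^ k) atTop (𝓝 0) :=
      tendsto_pow_atTop_nhds_zero_of_lt_one hc0 hc1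
    have := (hpow.comp hdiv).mul_const (osc z)
    simpa using this
  have hzero : Tendsto (fun n => ((Q ^ n) *ᵥ z) i - ∑ j, w j * z j) atTop (𝓝 0) :=
    squeeze_zero_norm (f := fun n => ((Q ^ n) *ᵥ z) i - ∑ j, w j * z j)
      (fun n => by rw [Real.norm_eq_abs]; exact hbound n) htend0
  have h' := hzero.add_const (∑ j, w j * z j)
  simp only [sub_add_cancel, zero_add] at h'
  exact h'


/-- for a stochastic matrix, `|(Q *ᵥ v) i|` is at most the sup of `|v|` -/
lemma abs_mulVec_le (hne : (univ : Finset (Fin N)).Nonempty) (Q : Matrix (Fin N) (Fin N) ℝ)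
    (h0 : ∀ i j, 0 ≤ Q i j) (h1 : ∀ i, ∑ j, Q i j = 1) (v : Fin N → ℝ) (i : Fin N) :
    |(Q *ᵥ v) i| ≤ univ.sup' hne fun j => |v j| := by
  calc |(Q *ᵥ v) i| = |∑ j, Q i j * v j| := by simp [Matrix.mulVec, dotProduct]
  _ ≤ ∑ j, |Q i j * v j| := Finset.abs_sum_le_sum_abs _ _
  _ = ∑ j, Q i j * |v j| := Finset.sum_congr rfl fun j _ => by
      rw [abs_mul, abs_of_nonneg (h0 i j)]
  _ ≤ ∑ j, Q i j * univ.sup' hne (fun j => |v j|) := Finset.sum_le_sum fun j _ =>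
      mul_le_mul_of_nonneg_left (Finset.le_sup' (fun j => |v j|) (mem_univ j)) (h0 i j)
  _ = univ.sup' hne fun j => |v j| := by rw [← Finset.sum_mul, h1 i, one_mul]

lemma abs_pow_mulVec_le (hne : (univ : Finset (Fin N)).Nonempty) (Q : Matrix (Fin N) (Fin N) ℝ)
    (h0 : ∀ i j, 0 ≤ Q i j) (h1 : ∀ i, ∑ j, Q i j = 1) (v : Fin N → ℝ) (n : ℕ) (i : Fin N) :
    |((Q ^ n) *ᵥ v) i| ≤ univ.sup' hne fun j => |v j| := by
  induction n generalizing i with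
  | zero =>
      simp only [pow_zero, Matrix.one_mulVec]
      exact Finset.le_sup' (fun j => |v j|) (mem_univ i)
  | succ n ih =>
      have heq : (Q ^ (n + 1)) *ᵥ v = Q *ᵥ ((Q ^ n) *ᵥ v) := by
        rw [Matrix.mulVec_mulVec, ← pow_succ']
      rw [heq]
      refine le_trans (abs_mulVec_le hne Q h0 h1 _ i) ?_
      exact Finset.sup'_le _ _ fun j _ => ih j

/-- Neumann series formula for `(1 - α Q)⁻¹ z` with `Q` stochastic, `0 ≤ α < 1`. -/
lemma neumann (hne : (univ : Finset (Fin N)).Nonempty) (Q : Matrix (Fin N) (Fin N) ℝ)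
    (h0 : ∀ i j, 0 ≤ Q i j) (h1 : ∀ i, ∑ j, Q i j = 1)
    {α : ℝ} (hα0 : 0 ≤ α) (hα1 : α < 1) (z : Fin N → ℝ) :
    (1 - α • Q)⁻¹ *ᵥ z = fun i => ∑' n, α ^ n * ((Q ^ n) *ᵥ z) i := by
  set C : ℝ := univ.sup' hne fun j => |z j| with hCdef
  have hsummable : ∀ i, Summable fun n => α ^ n * ((Q ^ n) *ᵥ z) i := by
    intro i
    refine Summable.of_norm_bounded
      (((summable_geometric_of_lt_one hα0 hα1)).mul_left C) fun n => ?_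
    rw [Real.norm_eq_abs, abs_mul, abs_pow, abs_of_nonneg hα0, mul_comm]
    exact mul_le_mul_of_nonneg_right (abs_pow_mulVec_le hne Q h0 h1 z n i)
      (pow_nonneg hα0 n)
  set s : Fin N → ℝ := fun i => ∑' n, α ^ n * ((Q ^ n) *ᵥ z) i with hsdef
  have hAs : (1 - α • Q) *ᵥ s = z := by
    funext i
    have hQs : (Q *ᵥ s) i = ∑' n, α ^ n * ((Q ^ (n + 1)) *ᵥ z) i := by
      calc (Q *ᵥ s) i = ∑ j, Q i j * s j := by simp [Matrix.mulVec, dotProduct]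
      _ = ∑ j, ∑' n, Q i j * (α ^ n * ((Q ^ n) *ᵥ z) j) := by
          refine Finset.sum_congr rfl fun j _ => ?_
          rw [tsum_mul_left]
      _ = ∑' n, ∑ j, Q i j * (α ^ n * ((Q ^ n) *ᵥ z) j) :=
          (Summable.tsum_finsetSum fun j _ => (hsummable j).mul_left (Q i j)).symm
      _ = ∑' n, α ^ n * ((Q ^ (n + 1)) *ᵥ z) i := by
          refine tsum_congr fun n => ?_
          have heq : (Q ^ (n + 1)) *ᵥ z = Q *ᵥ ((Q ^ n) *ᵥ z) := by
            rw [Matrix.mulVec_mulVec, ← pow_succ']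
          have happ : (Q *ᵥ ((Q ^ n) *ᵥ z)) i = ∑ j, Q i j * ((Q ^ n) *ᵥ z) j := rfl
          rw [heq, happ, Finset.mul_sum]
          exact Finset.sum_congr rfl fun j _ => by ring
    have hexp : s i = 1 * z i + ∑' n, α ^ (n + 1) * ((Q ^ (n + 1)) *ᵥ z) i := by
      have := Summable.tsum_eq_zero_add (hsummable i)
      simpa [Matrix.one_mulVec] using this
    have hcomp : ((1 - α • Q) *ᵥ s) i = s i - α * ((Q *ᵥ s) i) := by
      rw [Matrix.sub_mulVec, Matrix.one_mulVec, Matrix.smul_mulVec]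
      simp
    rw [hcomp, hQs, ← tsum_mul_left, hexp]
    have : ∀ n : ℕ, α * (α ^ n * ((Q ^ (n + 1)) *ᵥ z) i) =
        α ^ (n + 1) * ((Q ^ (n + 1)) *ᵥ z) i := fun n => by ring
    rw [tsum_congr this]
    ring
  -- invertibility
  have hinj : Function.Injective (1 - α • Q).mulVec := by
    intro x y hxy
    have hu : (1 - α • Q) *ᵥ (x - y) = 0 := by
      rw [Matrix.mulVec_sub]
      change (1 - α • Q).mulVec x - (1 - α • Q).mulVec y = 0
      rw [hxy, sub_self]
    set u := x - y with hudef
    have hu' : ∀ i, u i = α * (Q *ᵥ u) i := by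
      intro i
      have hcomp : ((1 - α • Q) *ᵥ u) i = u i - α * ((Q *ᵥ u) i) := by
        rw [Matrix.sub_mulVec, Matrix.one_mulVec, Matrix.smul_mulVec]
        simp
      have := congrFun hu i
      rw [hcomp] at this
      simp only [Pi.zero_apply] at this
      linarith
    set Cu : ℝ := univ.sup' hne fun j => |u j| with hCu
    obtain ⟨i0, -⟩ := id hne
    have hCu0 : 0 ≤ Cu := le_trans (abs_nonneg (u i0))
      (Finset.le_sup' (fun j => |u j|) (mem_univ i0))
    have hCule : Cu ≤ α * Cu := by
      refine Finset.sup'_le _ _ fun i _ => ?_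
      rw [hu' i, abs_mul, abs_of_nonneg hα0]
      exact mul_le_mul_of_nonneg_left (abs_mulVec_le hne Q h0 h1 u i) hα0
    have hCu_zero : Cu ≤ 0 := by nlinarith
    have huz : u = 0 := by
      funext i
      have h1' : |u i| ≤ Cu := Finset.le_sup' (fun j => |u j|) (mem_univ i)
      have := abs_nonneg (u i)
      have : |u i| = 0 := le_antisymm (le_trans h1' hCu_zero) this
      simpa using this
    exact sub_eq_zero.mp huz
  have hisUnit : IsUnit (1 - α • Q) := (Matrix.mulVec_injective_iff_isUnit).mp hinj
  have hdet : IsUnit (1 - α • Q).det := (Matrix.isUnit_iff_isUnit_det _).mp hisUnit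
  calc (1 - α • Q)⁻¹ *ᵥ z = (1 - α • Q)⁻¹ *ᵥ ((1 - α • Q) *ᵥ s) := by rw [hAs]
  _ = ((1 - α • Q)⁻¹ * (1 - α • Q)) *ᵥ s := by rw [Matrix.mulVec_mulVec]
  _ = s := by rw [Matrix.nonsing_inv_mul _ hdet, Matrix.one_mulVec]

/-- Abel mean: if `a n → L` (and `a` is bounded) then `(1-α) ∑ αⁿ aₙ → L` as `α → 1⁻`. -/
lemma abel_mean {a : ℕ → ℝ} {L C : ℝ} (hC : ∀ n, |a n| ≤ C)
    (ha : Tendsto a atTop (𝓝 L)) :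
    Tendsto (fun α : ℝ => (1 - α) * ∑' n, α ^ n * a n) (𝓝[<] (1 : ℝ)) (𝓝 L) := by
  have hC0 : 0 ≤ C := le_trans (abs_nonneg _) (hC 0)
  set b : ℕ → ℝ := fun n => Nat.rec (a 0) (fun k _ => a (k + 1) - a k) n with hb
  have hb0 : b 0 = a 0 := rfl
  have hbs : ∀ n, b (n + 1) = a (n + 1) - a n := fun n => rfl
  have hbabs : ∀ n, |b n| ≤ 2 * C := by
    intro n
    cases n with
    | zero => rw [hb0]; have := hC 0; linarith
    | succ n =>
        rw [hbs]
        have h1 := hC (n + 1)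
        have h2 := hC n
        have := abs_sub (a (n + 1)) (a n)
        calc |a (n + 1) - a n| ≤ |a (n + 1)| + |a n| := abs_sub _ _
        _ ≤ 2 * C := by linarith
  have hpartial : ∀ n, ∑ i ∈ Finset.range (n + 1), b i = a n := by
    intro n
    induction n with
    | zero => simp [hb0]
    | succ n ih => rw [Finset.sum_range_succ, ih, hbs]; ring
  have htend : Tendsto (fun n => ∑ i ∈ Finset.range n, b i) atTop (𝓝 L) := by
    apply (tendsto_add_atTop_iff_nat 1).mp
    exact ha.congr fun n => (hpartial n).symm
  have habel := Real.tendsto_tsum_powerSeries_nhdsWithin_lt htend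
  refine Filter.Tendsto.congr' ?_ habel
  have hmem : Set.Ioo (0 : ℝ) 1 ∈ 𝓝[<] (1 : ℝ) :=
    Ioo_mem_nhdsLT_of_mem ⟨zero_lt_one, le_refl 1⟩
  filter_upwards [hmem] with x hx
  obtain ⟨hx0, hx1⟩ := hx
  have hxa : |x| < 1 := by rw [abs_of_nonneg hx0.le]; exact hx1
  have hgeo : Summable fun n : ℕ => x ^ n := summable_geometric_of_lt_one hx0.le hx1
  have hA : Summable fun n => x ^ n * a n := by
    refine Summable.of_norm_bounded (hgeo.mul_left C) fun n => ?_
    rw [Real.norm_eq_abs, abs_mul, abs_pow, abs_of_nonneg hx0.le, mul_comm]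
    exact mul_le_mul_of_nonneg_right (hC n) (pow_nonneg hx0.le n)
  have hA1 : Summable fun n => x ^ (n + 1) * a (n + 1) := (summable_nat_add_iff 1).mpr hA
  have hA2 : Summable fun n => x ^ (n + 1) * a n :=
    (hA.mul_left x).congr fun n => by ring
  have hBsum : Summable fun n => b n * x ^ n := by
    refine Summable.of_norm_bounded (hgeo.mul_left (2 * C)) fun n => ?_
    rw [Real.norm_eq_abs, abs_mul, abs_pow, abs_of_nonneg hx0.le]
    exact mul_le_mul_of_nonneg_right (hbabs n) (pow_nonneg hx0.le n)
  set A : ℝ := ∑' n, x ^ n * a n with hAdef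
  have step1 : ∑' n, b n * x ^ n = b 0 + ∑' n, b (n + 1) * x ^ (n + 1) := by
    have := Summable.tsum_eq_zero_add hBsum
    simpa using this
  have step2 : ∑' n, b (n + 1) * x ^ (n + 1) =
      (∑' n, x ^ (n + 1) * a (n + 1)) - ∑' n, x ^ (n + 1) * a n := by
    rw [← Summable.tsum_sub hA1 hA2]
    exact tsum_congr fun n => by rw [hbs]; ring
  have step3 : b 0 + ∑' n, x ^ (n + 1) * a (n + 1) = A := by
    rw [hAdef, Summable.tsum_eq_zero_add hA]
    simp [hb0]
  have step4 : ∑' n, x ^ (n + 1) * a n = x * A := by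
    rw [hAdef, ← tsum_mul_left]
    exact tsum_congr fun n => by ring
  calc ∑' n, b n * x ^ n = b 0 + ((∑' n, x ^ (n + 1) * a (n + 1)) - ∑' n, x ^ (n + 1) * a n) := by
        rw [step1, step2]
  _ = A - x * A := by rw [← step4]; linarith [step3]
  _ = (1 - x) * A := by ring
  _ = (1 - x) * ∑' n, x ^ n * a n := rfl

end LimClass

/-- As `α → 1⁻`, the generalized classification function
`F_{·k}(α) = (1−α)(I − α D^{−σ} W D^{σ−1})⁻¹ Y_{·k}` converges componentwise to
`d_i^{1−σ} (1ᵀD1)⁻¹ ∑_{j : Y_{jk}=1} d_j^σ`; consequently the limiting classification of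
every node is determined by the class `k` maximizing `∑_{j labeled k} d_j^σ`. -/
theorem limiting_classification
    (N K : ℕ) (W : Matrix (Fin N) (Fin N) ℝ)
    (hWsym : W.IsSymm) (hWnonneg : ∀ i j, 0 ≤ W i j)
    (d : Fin N → ℝ) (hd : ∀ i, d i = ∑ j, W i j) (hdpos : ∀ i, 0 < d i)
    (hprim : ∃ m : ℕ, ∀ i j,
      0 < ((Matrix.diagonal (fun i => (d i)⁻¹) * W) ^ m) i j)
    (σ : ℝ) (Y : Matrix (Fin N) (Fin K) ℝ)
    (hY : ∀ j k, Y j k = 0 ∨ Y j k = 1)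
    (F : Fin K → ℝ → (Fin N → ℝ))
    (hF : ∀ k α, F k α = (1 - α) • ((1 - α • (Matrix.diagonal (fun i => d i ^ (-σ)) * W *
        Matrix.diagonal (fun i => d i ^ (σ - 1))))⁻¹ *ᵥ (fun j => Y j k)))
    (S : Fin K → ℝ)
    (hS : ∀ k, S k = ∑ j ∈ Finset.univ.filter (fun j => Y j k = 1), d j ^ σ) :
    (∀ k i, Tendsto (fun α : ℝ => F k α i) (𝓝[<] (1 : ℝ))
      (𝓝 (d i ^ (1 - σ) * (∑ j, d j)⁻¹ * S k)))
    ∧ (∀ i (k₁ k₂ : Fin K),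
        d i ^ (1 - σ) * (∑ j, d j)⁻¹ * S k₁ < d i ^ (1 - σ) * (∑ j, d j)⁻¹ * S k₂
        ↔ S k₁ < S k₂) := by
  constructor
  · intro k i
    have hne : (univ : Finset (Fin N)).Nonempty := ⟨i, mem_univ i⟩
    -- the stochastic matrix P
    set P : Matrix (Fin N) (Fin N) ℝ := Matrix.diagonal (fun i => (d i)⁻¹) * W with hPdef
    have hPapp : ∀ a b, P a b = (d a)⁻¹ * W a b := fun a b =>
      Matrix.diagonal_mul (fun i => (d i)⁻¹) W a b
    have hP0 : ∀ a b, 0 ≤ P a b := fun a b => by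
      rw [hPapp]
      exact mul_nonneg (inv_nonneg.2 (hdpos a).le) (hWnonneg a b)
    have hP1 : ∀ a, ∑ b, P a b = 1 := by
      intro a
      simp only [hPapp]
      rw [← Finset.mul_sum, ← hd a, inv_mul_cancel₀ (hdpos a).ne']
    -- total degree
    set T : ℝ := ∑ j, d j with hT
    have hTpos : 0 < T := Finset.sum_pos (fun j _ => hdpos j) hne
    -- the stationary distribution
    set w : Fin N → ℝ := fun j => d j * T⁻¹ with hw
    have hw0 : ∀ j, 0 ≤ w j := fun j => mul_nonneg (hdpos j).le (inv_nonneg.2 hTpos.le)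
    have hw1 : ∑ j, w j = 1 := by
      rw [hw]
      rw [← Finset.sum_mul, ← hT, mul_inv_cancel₀ hTpos.ne']
    have hwQ : ∀ b, ∑ a, w a * P a b = w b := by
      intro b
      have : ∀ a, w a * P a b = W a b * T⁻¹ := by
        intro a
        rw [hw, hPapp]
        have hda := (hdpos a).ne'
        have hTne := hTpos.ne'
        field_simp
      simp only [this]
      rw [← Finset.sum_mul, hw]
      congr 1
      calc ∑ a, W a b = ∑ a, W b a := Finset.sum_congr rfl fun a _ => hWsym.apply b a
      _ = d b := (hd b).symm
    -- the conjugating diagonal matrices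
    set E : Matrix (Fin N) (Fin N) ℝ := Matrix.diagonal (fun i => d i ^ (1 - σ)) with hE
    set E' : Matrix (Fin N) (Fin N) ℝ := Matrix.diagonal (fun i => d i ^ (σ - 1)) with hE'
    have hEE' : E * E' = 1 := by
      rw [hE, hE', Matrix.diagonal_mul_diagonal]
      have : ∀ a : Fin N, d a ^ (1 - σ) * d a ^ (σ - 1) = 1 := by
        intro a
        rw [← Real.rpow_add (hdpos a)]
        norm_num
      simp only [this]
      exact Matrix.diagonal_one
    have hE'E : E' * E = 1 := by
      rw [hE, hE', Matrix.diagonal_mul_diagonal]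
      have : ∀ a : Fin N, d a ^ (σ - 1) * d a ^ (1 - σ) = 1 := by
        intro a
        rw [← Real.rpow_add (hdpos a)]
        norm_num
      simp only [this]
      exact Matrix.diagonal_one
    -- the matrix in the statement is E * P * E'
    have hEP : E * P = Matrix.diagonal (fun i => d i ^ (-σ)) * W := by
      rw [hE, hPdef, ← Matrix.mul_assoc, Matrix.diagonal_mul_diagonal]
      have harg : (fun i => d i ^ (1 - σ) * (d i)⁻¹) = fun i => d i ^ (-σ) := by
        funext a
        rw [show (d a)⁻¹ = d a ^ (-1 : ℝ) from (Real.rpow_neg_one (d a)).symm,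
          ← Real.rpow_add (hdpos a)]
        rw [show (1 : ℝ) - σ + -1 = -σ by ring]
      rw [harg]
    have hMeq : Matrix.diagonal (fun i => d i ^ (-σ)) * W *
        Matrix.diagonal (fun i => d i ^ (σ - 1)) = E * P * E' := by
      rw [← hEP, hE']
    -- the vector z
    set z : Fin N → ℝ := fun j => d j ^ (σ - 1) * Y j k with hz
    -- the limit value
    set L : ℝ := ∑ j, w j * z j with hL
    have hLval : L = T⁻¹ * S k := by
      rw [hL, hS k, Finset.sum_filter, Finset.mul_sum]
      refine Finset.sum_congr rfl fun j _ => ?_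
      rw [hw, hz]
      rcases hY j k with h | h
      · rw [h]
        simp [h]
      · rw [h]
        simp only [h, if_pos rfl, mul_one]
        have : d j * T⁻¹ * (d j ^ (σ - 1)) = T⁻¹ * (d j * d j ^ (σ - 1)) := by ring
        rw [this]
        congr 1
        have hpow := Real.rpow_add (hdpos j) 1 (σ - 1)
        rw [Real.rpow_one, show (1 : ℝ) + (σ - 1) = σ by ring] at hpow
        exact hpow.symm
    -- convergence of the powers
    obtain ⟨m, hm⟩ := hprim
    have hPow : Tendsto (fun n => ((P ^ n) *ᵥ z) i) atTop (𝓝 L) :=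
      LimClass.pow_mulVec_tendsto hne P hP0 hP1 m hm w hw0 hw1 hwQ z i
    -- boundedness
    set C : ℝ := univ.sup' hne fun j => |z j| with hC
    have hCb : ∀ n, |((P ^ n) *ᵥ z) i| ≤ C := fun n =>
      LimClass.abs_pow_mulVec_le hne P hP0 hP1 z n i
    -- Abel mean
    have habel := LimClass.abel_mean hCb hPow
    have hfinal := habel.const_mul (d i ^ (1 - σ))
    -- identify F with the Abel mean eventually
    have hmem : Set.Ioo (0 : ℝ) 1 ∈ 𝓝[<] (1 : ℝ) :=
      Ioo_mem_nhdsLT_of_mem ⟨zero_lt_one, le_refl 1⟩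
    have heq : ∀ᶠ α in 𝓝[<] (1 : ℝ),
        d i ^ (1 - σ) * ((1 - α) * ∑' n, α ^ n * ((P ^ n) *ᵥ z) i) = F k α i := by
      filter_upwards [hmem] with α hα
      obtain ⟨hα0, hα1⟩ := hα
      rw [hF k α]
      have hinv : (1 - α • (Matrix.diagonal (fun i => d i ^ (-σ)) * W *
          Matrix.diagonal (fun i => d i ^ (σ - 1))))⁻¹ = E * (1 - α • P)⁻¹ * E' := by
        rw [hMeq]
        have hfactor : (1 : Matrix (Fin N) (Fin N) ℝ) - α • (E * P * E') =
            E * (1 - α • P) * E' := by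
          rw [Matrix.mul_sub, Matrix.sub_mul, Matrix.mul_one, hEE']
          congr 1
          rw [Matrix.mul_smul, Matrix.smul_mul, Matrix.mul_assoc]
        rw [hfactor, Matrix.mul_inv_rev, Matrix.mul_inv_rev]
        rw [Matrix.inv_eq_right_inv hEE', Matrix.inv_eq_right_inv hE'E]
        rw [Matrix.mul_assoc]
      rw [hinv]
      have hEz : E' *ᵥ (fun j => Y j k) = z := by
        funext j
        rw [hE', Matrix.mulVec_diagonal, hz]
      have hmv : (E * (1 - α • P)⁻¹ * E') *ᵥ (fun j => Y j k) =
          E *ᵥ ((1 - α • P)⁻¹ *ᵥ (E' *ᵥ (fun j => Y j k))) := by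
        rw [Matrix.mulVec_mulVec, Matrix.mulVec_mulVec]
      rw [hmv, hEz, LimClass.neumann hne P hP0 hP1 hα0.le hα1 z]
      rw [Pi.smul_apply, hE, Matrix.mulVec_diagonal]
      rw [smul_eq_mul]
      ring
    have := Tendsto.congr' heq hfinal
    convert this using 2
    rw [hLval]
    ring
  · intro i k₁ k₂
    have hne : (univ : Finset (Fin N)).Nonempty := ⟨i, mem_univ i⟩
    have hc : 0 < d i ^ (1 - σ) * (∑ j, d j)⁻¹ :=
      mul_pos (Real.rpow_pos_of_pos (hdpos i) _)
        (inv_pos.2 (Finset.sum_pos (fun j _ => hdpos j) hne))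
    exact mul_lt_mul_iff_right₀ hc
end

section
/- In the PageRank-based method (σ = 0), if the labeling columns are normalized so that Y_{·k}^T 1 is the same for all classes k, then the limit as α → 1⁻ of the classification function (1−α)(I − α W D^{−1})^{−1} Y_{·k} equals (1^T D 1)^{−1} (Y_{·k}^T 1) · D 1, which is the same vector for all k; hence no class dominates in the limit. -/
open Matrix Finset Filter Topology

private lemma pr_const_of_pos_stochastic {n : Type*} [Fintype n] [Nonempty n]
    (Q : Matrix n n ℝ) (hpos : ∀ i j, 0 < Q i j) (hrow : ∀ i, ∑ j, Q i j = 1)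
    (u : n → ℝ) (hu : Q *ᵥ u = u) : ∃ t, ∀ j, u j = t := by
  obtain ⟨j₀, -, hj₀⟩ := Finset.exists_max_image Finset.univ u Finset.univ_nonempty
  refine ⟨u j₀, fun j => ?_⟩
  have h2 : ∑ p, Q j₀ p * u p = u j₀ := by
    have := congrFun hu j₀
    simpa [Matrix.mulVec, dotProduct] using this
  have h1 : ∑ p, Q j₀ p * (u j₀ - u p) = 0 := by
    simp [mul_sub, Finset.sum_sub_distrib, ← Finset.sum_mul, hrow, h2]
  have h3 := (Finset.sum_eq_zero_iff_of_nonneg (fun p _ =>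
      mul_nonneg (hpos j₀ p).le (sub_nonneg.mpr (hj₀ p (Finset.mem_univ p))))).mp h1 j
      (Finset.mem_univ j)
  have h4 := (mul_eq_zero.mp h3).resolve_left (hpos j₀ j).ne'
  linarith

private lemma pr_zero_of_contraction {n : Type*} [Fintype n] [Nonempty n]
    (Q : Matrix n n ℝ) (hpos : ∀ i j, 0 ≤ Q i j) (hrow : ∀ i, ∑ j, Q i j = 1)
    (α : ℝ) (h0 : 0 ≤ α) (h1 : α < 1) (u : n → ℝ) (hu : α • (Q *ᵥ u) = u) : u = 0 := by
  obtain ⟨j₀, -, hj₀⟩ := Finset.exists_max_image Finset.univ (fun j => |u j|) Finset.univ_nonempty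
  have key : |u j₀| ≤ α * |u j₀| := by
    have h2 : α * ∑ p, Q j₀ p * u p = u j₀ := by
      have := congrFun hu j₀
      simpa [Matrix.mulVec, dotProduct] using this
    calc |u j₀| = α * |∑ p, Q j₀ p * u p| := by
          rw [← h2, abs_mul, abs_of_nonneg h0]
      _ ≤ α * ∑ p, |Q j₀ p * u p| := by
          exact mul_le_mul_of_nonneg_left (Finset.abs_sum_le_sum_abs _ _) h0
      _ = α * ∑ p, Q j₀ p * |u p| := by
          congr 1
          exact Finset.sum_congr rfl fun p _ => by rw [abs_mul, abs_of_nonneg (hpos j₀ p)]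
      _ ≤ α * ∑ p, Q j₀ p * |u j₀| := by
          refine mul_le_mul_of_nonneg_left (Finset.sum_le_sum fun p _ => ?_) h0
          exact mul_le_mul_of_nonneg_left (hj₀ p (Finset.mem_univ p)) (hpos j₀ p)
      _ = α * |u j₀| := by rw [← Finset.sum_mul, hrow, one_mul]
  have hz : |u j₀| = 0 := by nlinarith [abs_nonneg (u j₀)]
  funext j
  have := le_trans (hj₀ j (Finset.mem_univ j)) hz.le
  have := abs_nonneg (u j)
  simp only [Pi.zero_apply]
  exact abs_eq_zero.mp (le_antisymm ‹|u j| ≤ 0› ‹0 ≤ |u j|›)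

private lemma pr_mv {N : ℕ} (A : Matrix (Fin N) (Fin N) ℝ) (x : Fin N → ℝ) (p : Fin N) :
    (A *ᵥ x) p = ∑ j, A p j * x j := rfl

/-- In the PageRank-based method (`σ = 0`), if the labeling columns are
normalized so that `Y_{·k}ᵀ1 = c` for all classes `k`, then as `α → 1⁻` the classification
function `(1−α)(I − α W D⁻¹)⁻¹ Y_{·k}` converges (componentwise) to
`(1ᵀD1)⁻¹ c · D1`, the same vector for all `k`; hence no class dominates in the limit. -/
theorem pagerank_no_dominating_class
    (N K : ℕ) (W : Matrix (Fin N) (Fin N) ℝ)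
    (hWsym : W.IsSymm) (hWnonneg : ∀ i j, 0 ≤ W i j)
    (d : Fin N → ℝ) (hd : ∀ i, d i = ∑ j, W i j) (hdpos : ∀ i, 0 < d i)
    (hprim : ∃ m : ℕ, ∀ i j,
      0 < ((Matrix.diagonal (fun i => (d i)⁻¹) * W) ^ m) i j)
    (Y : Matrix (Fin N) (Fin K) ℝ) (hYnonneg : ∀ i k, 0 ≤ Y i k)
    (c : ℝ) (hYsum : ∀ k, ∑ i, Y i k = c) :
    ∀ (k : Fin K) (i : Fin N),
      Tendsto (fun α : ℝ =>
          ((1 - α) • ((1 - α • (W * Matrix.diagonal (fun i => (d i)⁻¹)))⁻¹ *ᵥ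
            (fun j => Y j k))) i)
        (𝓝[<] (1 : ℝ)) (𝓝 ((∑ j, d j)⁻¹ * c * d i)) := by
  intro k i
  rcases isEmpty_or_nonempty (Fin N) with hN | hN
  · exact hN.elim i
  obtain ⟨m, hm⟩ := hprim
  set P : Matrix (Fin N) (Fin N) ℝ := Matrix.diagonal (fun i => (d i)⁻¹) * W with hPdef
  set M : Matrix (Fin N) (Fin N) ℝ := W * Matrix.diagonal (fun i => (d i)⁻¹) with hMdef
  set S : ℝ := ∑ j, d j with hSdef
  set Yk : Fin N → ℝ := fun j => Y j k with hYkdef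
  have hSpos : 0 < S := Finset.sum_pos (fun j _ => hdpos j) Finset.univ_nonempty
  have hcol : ∀ j, ∑ i, W i j = d j := by
    intro j
    rw [hd j]
    exact Finset.sum_congr rfl fun l _ => hWsym.apply j l
  have hPapp : ∀ i j, P i j = (d i)⁻¹ * W i j := by
    intro i j; rw [hPdef, Matrix.diagonal_mul]
  have hMapp : ∀ i j, M i j = W i j * (d j)⁻¹ := by
    intro i j; rw [hMdef, Matrix.mul_diagonal]
  have hPnn : ∀ i j, 0 ≤ P i j := fun i j => by
    rw [hPapp]; exact mul_nonneg (inv_nonneg.mpr (hdpos i).le) (hWnonneg i j)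
  have hProw : ∀ i, ∑ j, P i j = 1 := by
    intro i
    simp only [hPapp]
    rw [← Finset.mul_sum, ← hd i, inv_mul_cancel₀ (hdpos i).ne']
  have hPmrow : ∀ i, ∑ j, (P ^ m) i j = 1 := by
    clear hm
    induction m with
    | zero => intro i; simp [Matrix.one_apply]
    | succ m ih =>
      intro i
      rw [pow_succ]
      simp only [Matrix.mul_apply]
      rw [Finset.sum_comm]
      calc ∑ l, ∑ j, (P ^ m) i l * P l j
          = ∑ l, (P ^ m) i l * ∑ j, P l j :=
            Finset.sum_congr rfl fun l _ => (Finset.mul_sum _ _ _).symm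
        _ = 1 := by simp only [hProw, mul_one]; exact ih i
  -- kernel characterization of M at eigenvalue 1
  have hMker : ∀ v : Fin N → ℝ, M *ᵥ v = v → (∑ j, v j) = 0 → v = 0 := by
    intro v hv hsum
    set u : Fin N → ℝ := fun j => (d j)⁻¹ * v j with hudef
    have hvu : ∀ j, v j = d j * u j := by
      intro j
      rw [hudef]
      rw [← mul_assoc, mul_inv_cancel₀ (hdpos j).ne', one_mul]
    have hPu : P *ᵥ u = u := by
      funext j
      have h1 : ∑ p, W j p * (d p)⁻¹ * v p = v j := by
        have h := congrFun hv j
        rw [pr_mv] at h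
        rw [← h]
        exact Finset.sum_congr rfl fun p _ => by rw [hMapp]
      rw [pr_mv]
      calc ∑ p, P j p * u p
          = (d j)⁻¹ * ∑ p, W j p * (d p)⁻¹ * v p := by
            rw [Finset.mul_sum]
            refine Finset.sum_congr rfl fun p _ => ?_
            simp only [hPapp, hudef]
            ring
        _ = u j := by rw [h1]
    have hPmu : (P ^ m) *ᵥ u = u := by
      clear hm hPmrow
      induction m with
      | zero => simp
      | succ m ih => rw [pow_succ', ← Matrix.mulVec_mulVec, ih, hPu]
    obtain ⟨t, ht⟩ := pr_const_of_pos_stochastic (P ^ m) hm hPmrow u hPmu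
    have hsum2 : t * S = 0 := by
      rw [← hsum, hSdef, Finset.mul_sum]
      exact (Finset.sum_congr rfl fun j _ => by rw [hvu j, ht j]; ring).symm
    have ht0 : t = 0 := by
      rcases mul_eq_zero.mp hsum2 with h | h
      · exact h
      · exact absurd h hSpos.ne'
    funext j
    rw [Pi.zero_apply, hvu j, ht j, ht0, mul_zero]
  -- the projection Π
  set Pr : Matrix (Fin N) (Fin N) ℝ := Matrix.of (fun i _ : Fin N => S⁻¹ * d i) with hPrdef
  have hPrapp : ∀ i j, Pr i j = S⁻¹ * d i := fun i j => rfl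
  have hMPr : M * Pr = Pr := by
    ext i j
    simp only [Matrix.mul_apply, hMapp, hPrapp]
    calc ∑ l, W i l * (d l)⁻¹ * (S⁻¹ * d l)
        = ∑ l, S⁻¹ * W i l := Finset.sum_congr rfl fun l _ => by
          rw [show W i l * (d l)⁻¹ * (S⁻¹ * d l) = S⁻¹ * (W i l * ((d l)⁻¹ * d l)) by ring,
            inv_mul_cancel₀ (hdpos l).ne', mul_one]
      _ = S⁻¹ * d i := by rw [← Finset.mul_sum, ← hd i]
  have hPrM : Pr * M = Pr := by
    ext i j
    simp only [Matrix.mul_apply, hMapp, hPrapp]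
    calc ∑ l, S⁻¹ * d i * (W l j * (d j)⁻¹)
        = S⁻¹ * d i * ((∑ l, W l j) * (d j)⁻¹) := by
          rw [← Finset.mul_sum, Finset.sum_mul]
      _ = S⁻¹ * d i := by rw [hcol j, mul_inv_cancel₀ (hdpos j).ne', mul_one]
  have hPrPr : Pr * Pr = Pr := by
    ext i j
    simp only [Matrix.mul_apply, hPrapp]
    calc ∑ l, S⁻¹ * d i * (S⁻¹ * d l)
        = S⁻¹ * d i * (S⁻¹ * ∑ l, d l) := by
          rw [← Finset.mul_sum, ← Finset.mul_sum]
      _ = S⁻¹ * d i := by rw [← hSdef, inv_mul_cancel₀ hSpos.ne', mul_one]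
  set C : ℝ → Matrix (Fin N) (Fin N) ℝ := fun α => 1 - α • M + α • Pr with hCdef
  -- invertibility of 1 - α • M for 0 ≤ α < 1
  have hdetA : ∀ α : ℝ, 0 ≤ α → α < 1 → IsUnit (1 - α • M).det := by
    intro α h0 h1
    rw [isUnit_iff_ne_zero]
    intro hdet
    obtain ⟨v, hv0, hv⟩ := Matrix.exists_mulVec_eq_zero_iff.mpr hdet
    have hv' : v = α • (M *ᵥ v) := by
      rw [Matrix.sub_mulVec, Matrix.one_mulVec, sub_eq_zero] at hv
      exact hv.trans (Matrix.smul_mulVec α M v)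
    set u : Fin N → ℝ := fun j => (d j)⁻¹ * v j with hudef
    have hPu : α • (P *ᵥ u) = u := by
      funext j
      have h2 : v j = α * ∑ p, W j p * (d p)⁻¹ * v p := by
        have h := congrFun hv' j
        rw [Pi.smul_apply, pr_mv, smul_eq_mul] at h
        rw [h]
        congr 1
        exact Finset.sum_congr rfl fun p _ => by rw [hMapp]
      rw [Pi.smul_apply, pr_mv, smul_eq_mul]
      have h3 : ∑ p, P j p * u p = (d j)⁻¹ * ∑ p, W j p * (d p)⁻¹ * v p := by
        rw [Finset.mul_sum]
        refine Finset.sum_congr rfl fun p _ => ?_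
        simp only [hPapp, hudef]
        ring
      rw [h3, show α * ((d j)⁻¹ * ∑ p, W j p * (d p)⁻¹ * v p)
          = (d j)⁻¹ * (α * ∑ p, W j p * (d p)⁻¹ * v p) from by ring, ← h2]
    have hu0 := pr_zero_of_contraction P hPnn hProw α h0 h1 u hPu
    apply hv0
    funext j
    have huj : u j = 0 := congrFun hu0 j
    have hvj : v j = d j * u j := by
      rw [hudef, ← mul_assoc, mul_inv_cancel₀ (hdpos j).ne', one_mul]
    rw [Pi.zero_apply, hvj, huj, mul_zero]
  -- invertibility of C 1
  have hdetC1 : (C 1).det ≠ 0 := by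
    intro hdet
    obtain ⟨v, hv0, hv⟩ := Matrix.exists_mulVec_eq_zero_iff.mpr hdet
    have hv1 : v - M *ᵥ v + Pr *ᵥ v = 0 := by
      have h := hv
      rw [hCdef] at h
      simpa [Matrix.add_mulVec, Matrix.sub_mulVec, Matrix.one_mulVec,
        Matrix.smul_mulVec] using h
    have hMsum : ∑ j, (M *ᵥ v) j = ∑ j, v j := by
      simp only [pr_mv, hMapp]
      rw [Finset.sum_comm]
      refine Finset.sum_congr rfl fun p _ => ?_
      calc ∑ j, W j p * (d p)⁻¹ * v p
          = (∑ j, W j p) * ((d p)⁻¹ * v p) := by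
            rw [Finset.sum_mul]
            exact Finset.sum_congr rfl fun j _ => by ring
        _ = v p := by rw [hcol p, ← mul_assoc, mul_inv_cancel₀ (hdpos p).ne', one_mul]
    have hPrv : ∀ p, (Pr *ᵥ v) p = S⁻¹ * d p * ∑ j, v j := by
      intro p
      rw [pr_mv]
      simp only [hPrapp]
      rw [← Finset.mul_sum]
    have hPrvsum : ∑ p, (Pr *ᵥ v) p = ∑ j, v j := by
      rw [Finset.sum_congr rfl fun p _ => hPrv p]
      calc ∑ p, S⁻¹ * d p * (∑ j, v j)
          = (∑ p, d p) * (S⁻¹ * ∑ j, v j) := by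
            rw [Finset.sum_mul]
            exact Finset.sum_congr rfl fun p _ => by ring
        _ = ∑ j, v j := by
            rw [← hSdef, ← mul_assoc, mul_inv_cancel₀ hSpos.ne', one_mul]
    have hvsum : ∑ j, v j = 0 := by
      have h0 : ∑ j, (v - M *ᵥ v + Pr *ᵥ v) j = 0 := by rw [hv1]; simp
      simp only [Pi.add_apply, Pi.sub_apply, Finset.sum_add_distrib,
        Finset.sum_sub_distrib, hMsum, hPrvsum] at h0
      linarith
    have hPrv0 : Pr *ᵥ v = 0 := funext fun p => by
      rw [hPrv p, hvsum, mul_zero, Pi.zero_apply]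
    have hMv : M *ᵥ v = v := by
      have h := hv1
      rw [hPrv0, add_zero, sub_eq_zero] at h
      exact h.symm
    exact hv0 (hMker v hMv hvsum)
  -- continuity
  have hCcont : Continuous C := by
    rw [hCdef]
    exact (continuous_const.sub (continuous_id.smul continuous_const)).add
      (continuous_id.smul continuous_const)
  have hdetCont : Continuous fun α => (C α).det := hCcont.matrix_det
  have hadjCont : Continuous fun α => (C α).adjugate := hCcont.matrix_adjugate
  have hCPr : ∀ α : ℝ, C α * Pr = Pr := by
    intro α
    rw [hCdef]
    simp only
    rw [Matrix.add_mul, Matrix.sub_mul, Matrix.one_mul, Matrix.smul_mul, Matrix.smul_mul,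
      hMPr, hPrPr]
    abel
  -- key resolvent identity
  have hkey : ∀ α : ℝ, 0 ≤ α → α < 1 → (C α).det ≠ 0 →
      (1 - α) • (1 - α • M)⁻¹ = (1 - α) • (C α)⁻¹ + α • Pr := by
    intro α h0 h1 hdet
    have hA := hdetA α h0 h1
    have hC : IsUnit (C α).det := isUnit_iff_ne_zero.mpr hdet
    have hα1 : (1 : ℝ) - α ≠ 0 := sub_ne_zero.mpr (ne_of_gt h1)
    have hPrA : Pr * (1 - α • M) = (1 - α) • Pr := by
      rw [Matrix.mul_sub, Matrix.mul_one, Matrix.mul_smul, hPrM, sub_smul, one_smul]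
    have hPrAinv : Pr * (1 - α • M)⁻¹ = (1 - α)⁻¹ • Pr := by
      have h2 : Pr = (1 - α) • (Pr * (1 - α • M)⁻¹) := by
        conv_lhs => rw [← Matrix.mul_one Pr, ← Matrix.mul_nonsing_inv (1 - α • M) hA,
          ← Matrix.mul_assoc, hPrA, Matrix.smul_mul]
      have h3 := congrArg (fun Z : Matrix (Fin N) (Fin N) ℝ => (1 - α)⁻¹ • Z) h2
      simp only [smul_smul, inv_mul_cancel₀ hα1, one_smul] at h3
      exact h3.symm
    have hmain : C α * ((1 - α) • (1 - α • M)⁻¹) = C α * ((1 - α) • (C α)⁻¹ + α • Pr) := by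
      have hCA : C α * (1 - α • M)⁻¹ = 1 + (α * (1 - α)⁻¹) • Pr := by
        have hsplit : C α = (1 - α • M) + α • Pr := rfl
        rw [hsplit, Matrix.add_mul, Matrix.mul_nonsing_inv _ hA, Matrix.smul_mul, hPrAinv,
          smul_smul]
      rw [Matrix.mul_smul, hCA, Matrix.mul_add, Matrix.mul_smul,
        Matrix.mul_nonsing_inv _ hC, Matrix.mul_smul, hCPr α]
      rw [smul_add, smul_smul]
      congr 1
      rw [show (1 - α) * (α * (1 - α)⁻¹) = α * ((1 - α) * (1 - α)⁻¹) by ring,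
        mul_inv_cancel₀ hα1, mul_one]
    have h4 := congrArg (fun Z : Matrix (Fin N) (Fin N) ℝ => (C α)⁻¹ * Z) hmain
    simpa [← Matrix.mul_assoc, Matrix.nonsing_inv_mul _ hC] using h4
  -- projection applied to Y column
  have hPrY : Pr *ᵥ Yk = fun p => S⁻¹ * d p * c := by
    funext p
    rw [pr_mv]
    simp only [hPrapp]
    rw [← Finset.mul_sum, hYkdef]
    rw [hYsum k]
  -- eventual equality
  have hEv : ∀ᶠ α in 𝓝[<] (1 : ℝ),
      ((1 - α) • ((1 - α • M)⁻¹ *ᵥ Yk)) i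
        = (1 - α) * (((C α)⁻¹ *ᵥ Yk) i) + α * (S⁻¹ * d i * c) := by
    have e1 : Set.Ioo (0 : ℝ) 1 ∈ 𝓝[<] (1 : ℝ) :=
      Ioo_mem_nhdsLT_of_mem (by constructor <;> norm_num)
    have e2 : ∀ᶠ α in 𝓝[<] (1 : ℝ), (C α).det ≠ 0 :=
      ((hdetCont.tendsto 1).mono_left nhdsWithin_le_nhds).eventually_ne hdetC1
    filter_upwards [e1, e2] with α hα hdet
    have hid := hkey α hα.1.le hα.2 hdet
    have happ := congrFun (congrArg (fun A => A *ᵥ Yk) hid) i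
    simp only [Matrix.add_mulVec, Matrix.smul_mulVec, Pi.add_apply, Pi.smul_apply,
      smul_eq_mul] at happ
    rw [Pi.smul_apply, smul_eq_mul, happ, hPrY]
  -- limits
  have hterm2 : Tendsto (fun α : ℝ => α * (S⁻¹ * d i * c)) (𝓝[<] (1 : ℝ))
      (𝓝 (S⁻¹ * d i * c)) := by
    have h : Tendsto (fun α : ℝ => α * (S⁻¹ * d i * c)) (𝓝 (1 : ℝ))
        (𝓝 (1 * (S⁻¹ * d i * c))) := (continuous_id.mul continuous_const).tendsto 1
    rw [one_mul] at h
    exact h.mono_left nhdsWithin_le_nhds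
  have hinvdet : Tendsto (fun α => ((C α).det)⁻¹) (𝓝 (1 : ℝ)) (𝓝 (((C 1).det)⁻¹)) :=
    (hdetCont.tendsto 1).inv₀ hdetC1
  have hadjY : Tendsto (fun α => ((C α).adjugate *ᵥ Yk) i) (𝓝 (1 : ℝ))
      (𝓝 (((C 1).adjugate *ᵥ Yk) i)) := by
    have hcont : Continuous fun α => ((C α).adjugate *ᵥ Yk) i := by
      simp only [pr_mv]
      exact continuous_finset_sum _ fun j _ =>
        ((continuous_apply j).comp ((continuous_apply i).comp hadjCont)).mul continuous_const
    exact hcont.tendsto 1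
  have hCinvY : Tendsto (fun α => ((C α)⁻¹ *ᵥ Yk) i) (𝓝 (1 : ℝ))
      (𝓝 (((C 1).det)⁻¹ * (((C 1).adjugate *ᵥ Yk) i))) := by
    have heqf : ∀ α : ℝ, ((C α)⁻¹ *ᵥ Yk) i
        = ((C α).det)⁻¹ * (((C α).adjugate *ᵥ Yk) i) := by
      intro α
      rw [Matrix.inv_def, Matrix.smul_mulVec, Pi.smul_apply, smul_eq_mul,
        Ring.inverse_eq_inv']
    simp only [heqf]
    exact hinvdet.mul hadjY
  have hterm1 : Tendsto (fun α : ℝ => (1 - α) * (((C α)⁻¹ *ᵥ Yk) i)) (𝓝[<] (1 : ℝ))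
      (𝓝 0) := by
    have h5 : Tendsto (fun α : ℝ => 1 - α) (𝓝 (1 : ℝ)) (𝓝 0) := by
      have h : Tendsto (fun α : ℝ => 1 - α) (𝓝 (1 : ℝ)) (𝓝 (1 - 1)) :=
        (continuous_const.sub continuous_id).tendsto 1
      rw [sub_self] at h
      exact h
    have h6 := (h5.mul hCinvY).mono_left (nhdsWithin_le_nhds (s := Set.Iio (1 : ℝ)))
    simpa using h6
  have hfinal := hterm1.add hterm2
  rw [zero_add] at hfinal
  have hlim : S⁻¹ * c * d i = S⁻¹ * d i * c := by ring
  rw [hlim]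
  exact Tendsto.congr' (hEv.mono fun α h => h.symm) hfinal
end
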